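/- arXiv:1108.4750 — 4 statements merged into one kernel-verified Lean document; each statement's English description precedes it below -/
import Mathlib

section
/- Let (W,S) be a Coxeter system with J ⊆ S such that W_J is finite with longest element w_J. For w ∈ D_J and s ∈ S: s satisfies ℓ(s·ww_J) < ℓ(ww_J) if and only if either ℓ(sw) < ℓ(w), or ℓ(sw) > ℓ(w) and sw ∉ D_J. Equivalently, the left descent set L(ww_J) equals SD(w) ∪ WD_J(w), where SD(w) = {s | sw < w} and WD_J(w) = {s | sw > w, sw ∉ D_J}. -/
def CoxeterSystem.DJ {B W : Type*} [Group W] {M : CoxeterMatrix B}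
    (cs : CoxeterSystem M W) (J : Set B) : Set W :=
  {d : W | ∀ i ∈ J, cs.length d < cs.length (d * cs.simple i)}

open List

namespace CoxAux
noncomputable section
open CoxeterSystem Classical

set_option linter.unusedSectionVars false
set_option maxHeartbeats 800000

variable {B W : Type*} [Group W] {M : CoxeterMatrix B} (cs : CoxeterSystem M W)

local prefix:100 "s" => cs.simple
local prefix:100 "π" => cs.wordProd
local prefix:100 "ℓ" => cs.length

lemma conj_eq_iff (g c x : W) : g * x * g⁻¹ = c ↔ x = g⁻¹ * c * g := by
  constructor
  · intro h; rw [← h]; group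
  · intro h; rw [h]; group

/-- The function underlying the permutation `eta i`. -/
def etaFun (i : B) : W × ZMod 2 → W × ZMod 2 :=
  fun p => (s i * p.1 * s i, p.2 + if p.1 = s i then 1 else 0)

lemma simple_conj_simple_eq_iff (i j : B) (t : W) :
    s i * t * s i = s j ↔ t = s i * s j * s i := by
  constructor
  · intro h
    rw [← h]
    simp [mul_assoc, cs.simple_mul_simple_cancel_left, cs.simple_mul_simple_cancel_right]
  · rintro rfl
    simp [mul_assoc, cs.simple_mul_simple_cancel_left, cs.simple_mul_simple_cancel_right]

lemma etaFun_invol (i : B) (p : W × ZMod 2) : etaFun cs i (etaFun cs i p) = p := by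
  obtain ⟨t, e⟩ := p
  simp only [etaFun]
  refine Prod.ext ?_ ?_
  · simp [mul_assoc, cs.simple_mul_simple_cancel_left, cs.simple_mul_simple_cancel_right]
  · simp only [simple_conj_simple_eq_iff, cs.simple_mul_simple_cancel_right]
    have h11 : (1 : ZMod 2) + 1 = 0 := by decide
    by_cases ht : t = s i <;> simp [ht, add_assoc, h11]

/-- The permutation of `W × ZMod 2` associated to a simple reflection. -/
def eta (i : B) : Equiv.Perm (W × ZMod 2) :=
  ⟨etaFun cs i, etaFun cs i, etaFun_invol cs i, etaFun_invol cs i⟩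

lemma eta_apply (i : B) (p : W × ZMod 2) :
    eta cs i p = (s i * p.1 * s i, p.2 + if p.1 = s i then 1 else 0) := rfl

lemma eta_mul_apply (i j : B) (p : W × ZMod 2) :
    (eta cs i * eta cs j) p =
      ((s i * s j) * p.1 * (s i * s j)⁻¹,
        p.2 + ((if p.1 = s j then (1 : ZMod 2) else 0)
          + (if p.1 = s j * (s i * s j) then (1 : ZMod 2) else 0))) := by
  rw [Equiv.Perm.mul_apply, eta_apply, eta_apply]
  refine Prod.ext ?_ ?_
  · simp [mul_inv_rev, cs.inv_simple, mul_assoc]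
  · simp only [simple_conj_simple_eq_iff]
    have : s j * s i * s j = s j * (s i * s j) := by rw [mul_assoc]
    simp only [this]
    ring

lemma simple_mul_pow_comm (i j : B) (m : ℕ) :
    ((s i * s j) ^ m)⁻¹ * s j = s j * (s i * s j) ^ m := by
  induction m with
  | zero => simp
  | succ m ih =>
    have h2 : (s i * s j)⁻¹ * s j = s j * (s i * s j) := by
      simp [mul_inv_rev, cs.inv_simple, mul_assoc, cs.simple_mul_simple_cancel_left]
    calc ((s i * s j) ^ (m+1))⁻¹ * s j
        = (s i * s j)⁻¹ * (((s i * s j) ^ m)⁻¹ * s j) := by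
          rw [pow_succ, mul_inv_rev, mul_assoc]
      _ = ((s i * s j)⁻¹ * s j) * (s i * s j) ^ m := by rw [ih, mul_assoc]
      _ = s j * (s i * s j) ^ (m+1) := by rw [h2, mul_assoc, ← pow_succ']

lemma eta_mul_pow (i j : B) (k : ℕ) (p : W × ZMod 2) :
    ((eta cs i * eta cs j) ^ k) p =
      ((s i * s j) ^ k * p.1 * ((s i * s j) ^ k)⁻¹,
        p.2 + ∑ l ∈ Finset.range (2 * k),
          (if p.1 = s j * (s i * s j) ^ l then (1 : ZMod 2) else 0)) := by
  induction k with
  | zero => simp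
  | succ k ih =>
    rw [pow_succ', Equiv.Perm.mul_apply, ih, eta_mul_apply]
    have c1 : ((s i * s j) ^ k * p.1 * ((s i * s j) ^ k)⁻¹ = s j)
        ↔ (p.1 = s j * (s i * s j) ^ (2 * k)) := by
      rw [conj_eq_iff, simple_mul_pow_comm, mul_assoc, ← pow_add, two_mul]
    have c2 : ((s i * s j) ^ k * p.1 * ((s i * s j) ^ k)⁻¹ = s j * (s i * s j))
        ↔ (p.1 = s j * (s i * s j) ^ (2 * k + 1)) := by
      rw [conj_eq_iff, ← mul_assoc, simple_mul_pow_comm]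
      have : s j * (s i * s j) ^ k * (s i * s j) * (s i * s j) ^ k
          = s j * (s i * s j) ^ (2 * k + 1) := by
        rw [mul_assoc, mul_assoc, ← pow_succ', ← pow_add]
        ring_nf
      rw [this]
    refine Prod.ext ?_ ?_
    · show (s i * s j) * ((s i * s j) ^ k * p.1 * ((s i * s j) ^ k)⁻¹) * (s i * s j)⁻¹
        = (s i * s j) ^ (k+1) * p.1 * ((s i * s j) ^ (k+1))⁻¹
      rw [pow_succ', mul_inv_rev]
      simp [mul_assoc]
    · simp only [c1, c2]
      have : 2 * (k + 1) = (2 * k) + 1 + 1 := by ring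
      rw [this, Finset.sum_range_succ, Finset.sum_range_succ]
      ring


/-- Sum of indicators, in `ZMod 2`, of how often `t` occurs in a list. -/
def indSum (t : W) (l : List W) : ZMod 2 :=
  (l.map (fun x => if t = x then (1 : ZMod 2) else 0)).sum

@[simp] lemma indSum_nil (t : W) : indSum t ([] : List W) = 0 := rfl

lemma indSum_cons (t x : W) (l : List W) :
    indSum t (x :: l) = (if t = x then (1 : ZMod 2) else 0) + indSum t l := by
  simp [indSum]

lemma indSum_eq_zero_of_not_mem {t : W} {l : List W} (h : t ∉ l) : indSum t l = 0 := by
  induction l with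
  | nil => rfl
  | cons x l ih =>
    rw [indSum_cons]
    have hx : t ≠ x := fun hh => h (hh ▸ List.mem_cons_self (a := x) (l := l))
    rw [if_neg hx, ih (fun hh => h (List.mem_cons_of_mem x hh)), add_zero]

lemma mem_of_indSum_ne_zero {t : W} {l : List W} (h : indSum t l ≠ 0) : t ∈ l := by
  by_contra hc
  exact h (indSum_eq_zero_of_not_mem hc)

lemma indSum_eq_one_of_nodup {t : W} {l : List W} (hn : l.Nodup) (h : t ∈ l) :
    indSum t l = 1 := by
  induction l with
  | nil => simp at h
  | cons x l ih =>
    rw [indSum_cons]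
    rcases List.mem_cons.mp h with rfl | h'
    · rw [if_pos rfl, indSum_eq_zero_of_not_mem (List.nodup_cons.mp hn).1, add_zero]
    · have hx : t ≠ x := by
        rintro rfl
        exact (List.nodup_cons.mp hn).1 h'
      rw [if_neg hx, ih (List.nodup_cons.mp hn).2 h', zero_add]


lemma eta_liftable : M.IsLiftable (fun i => eta cs i) := by
  intro i j
  apply Equiv.ext
  intro p
  rw [Equiv.Perm.one_apply, eta_mul_pow]
  have hm : (s i * s j) ^ M i j = 1 := cs.simple_mul_simple_pow i j
  refine Prod.ext ?_ ?_
  · show (s i * s j) ^ M i j * p.1 * ((s i * s j) ^ M i j)⁻¹ = p.1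
    rw [hm]
    simp
  · show p.2 + ∑ l ∈ Finset.range (2 * M i j),
        (if p.1 = s j * (s i * s j) ^ l then (1 : ZMod 2) else 0) = p.2
    have h2m : 2 * M i j = M i j + M i j := by ring
    rw [h2m, Finset.sum_range_add]
    have hshift : ∀ l, (if p.1 = s j * (s i * s j) ^ (M i j + l) then (1 : ZMod 2) else 0)
        = (if p.1 = s j * (s i * s j) ^ l then (1 : ZMod 2) else 0) := by
      intro l
      rw [pow_add, hm, one_mul]
    simp only [hshift]
    have hx : ∀ x : ZMod 2, x + x = 0 := by decide
    rw [hx, add_zero]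

/-- The permutation representation of `W` on `W × ZMod 2`. -/
def etaHom : W →* Equiv.Perm (W × ZMod 2) := cs.lift ⟨fun i => eta cs i, eta_liftable cs⟩

lemma etaHom_simple (i : B) : etaHom cs (s i) = eta cs i :=
  cs.lift_apply_simple (eta_liftable cs) i

lemma etaHom_wordProd (ω : List B) (p : W × ZMod 2) :
    etaHom cs (π ω) p = (π ω * p.1 * (π ω)⁻¹, p.2 + indSum p.1 (cs.rightInvSeq ω)) := by
  induction ω generalizing p with
  | nil => simp [CoxeterSystem.wordProd_nil, CoxeterSystem.rightInvSeq, indSum_nil]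
  | cons i ω ih =>
    rw [cs.wordProd_cons, map_mul, Equiv.Perm.mul_apply, ih, etaHom_simple, eta_apply]
    have hris : cs.rightInvSeq (i :: ω) = ((π ω)⁻¹ * s i * π ω) :: cs.rightInvSeq ω := rfl
    refine Prod.ext ?_ ?_
    · show s i * (π ω * p.1 * (π ω)⁻¹) * s i = π (i :: ω) * p.1 * (π (i :: ω))⁻¹
      rw [cs.wordProd_cons, mul_inv_rev, cs.inv_simple]
      simp [mul_assoc]
    · show (p.2 + indSum p.1 (cs.rightInvSeq ω))
          + (if π ω * p.1 * (π ω)⁻¹ = s i then (1 : ZMod 2) else 0)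
        = p.2 + indSum p.1 (cs.rightInvSeq (i :: ω))
      rw [hris, indSum_cons]
      have hcond : (π ω * p.1 * (π ω)⁻¹ = s i) ↔ (p.1 = (π ω)⁻¹ * s i * π ω) := by
        constructor
        · intro h; rw [← h]; group
        · intro h; rw [h]; group
      simp only [hcond]
      ring



lemma getD_eq_getElem' {α : Type*} (l : List α) (d : α) {k : ℕ} (h : k < l.length) :
    l.getD k d = l[k] := by
  rw [List.getD_eq_getElem?_getD, List.getElem?_eq_getElem h]
  rfl

lemma indSum_ris_invariant {ω ω' : List B} (h : π ω = π ω') (t : W) :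
    indSum t (cs.rightInvSeq ω) = indSum t (cs.rightInvSeq ω') := by
  have h1 := etaHom_wordProd cs ω (t, 0)
  have h2 := etaHom_wordProd cs ω' (t, 0)
  rw [h] at h1
  have h3 := congrArg Prod.snd (h1.symm.trans h2)
  simpa using h3

lemma simple_mem_rightInvSeq {ω : List B} (hred : cs.IsReduced ω) {j : B}
    (h : ℓ (π ω * s j) < ℓ (π ω)) : s j ∈ cs.rightInvSeq ω := by
  obtain ⟨ω', hlen, hprod⟩ := cs.exists_reduced_word (π ω * s j)
  replace hlen : ω'.length = ℓ (π ω * s j) := by rw [hprod]; exact hlen.symm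
  have hπ : π (ω' ++ [j]) = π ω := by
    rw [cs.wordProd_append, cs.wordProd_singleton, ← hprod,
      cs.simple_mul_simple_cancel_right]
  have hlsj : ℓ (π ω * s j) + 1 = ℓ (π ω) := by
    rcases cs.length_mul_simple (π ω) j with h' | h'
    · omega
    · exact h'
  have hred'' : cs.IsReduced (ω' ++ [j]) := by
    show ℓ (π (ω' ++ [j])) = _
    rw [hπ, List.length_append, List.length_singleton, hlen]
    omega
  have hmem : s j ∈ cs.rightInvSeq (ω' ++ [j]) := by
    have hget := cs.getD_rightInvSeq (ω' ++ [j]) ω'.length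
    have hdrop : (ω' ++ [j]).drop (ω'.length + 1) = [] := by
      apply List.drop_eq_nil_of_le
      simp
    have hgetel : (ω' ++ [j])[ω'.length]? = some j := by
      simp
    rw [hdrop, hgetel] at hget
    simp only [cs.wordProd_nil, Option.map_some, Option.getD_some, inv_one, one_mul,
      mul_one] at hget
    have hlt : ω'.length < (cs.rightInvSeq (ω' ++ [j])).length := by
      rw [cs.length_rightInvSeq]
      simp
    rw [getD_eq_getElem' _ _ hlt] at hget
    rw [← hget]
    exact List.getElem_mem hlt
  have hinv := indSum_ris_invariant cs hπ.symm (s j)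
  have hone : indSum (s j) (cs.rightInvSeq (ω' ++ [j])) = 1 :=
    indSum_eq_one_of_nodup (hred''.nodup_rightInvSeq) hmem
  apply mem_of_indSum_ne_zero
  rw [hinv, hone]
  decide

lemma rightExchange {ω : List B} (hred : cs.IsReduced ω) {j : B}
    (h : ℓ (π ω * s j) < ℓ (π ω)) : ∃ k < ω.length, π ω * s j = π (ω.eraseIdx k) := by
  obtain ⟨k, hk, hget⟩ := List.getElem_of_mem (simple_mem_rightInvSeq cs hred h)
  have hk' : k < ω.length := by rwa [cs.length_rightInvSeq] at hk
  refine ⟨k, hk', ?_⟩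
  have hw := cs.wordProd_mul_getD_rightInvSeq ω k
  rwa [getD_eq_getElem' _ _ hk, hget] at hw

lemma leftExchange {ω : List B} (hred : cs.IsReduced ω) {j : B}
    (h : ℓ (s j * π ω) < ℓ (π ω)) : ∃ k < ω.length, s j * π ω = π (ω.eraseIdx k) := by
  have hrev : cs.IsReduced ω.reverse := (cs.isReduced_reverse_iff ω).mpr hred
  have h2 : ℓ (π ω.reverse * s j) < ℓ (π ω.reverse) := by
    rw [cs.wordProd_reverse]
    have e : (π ω)⁻¹ * s j = (s j * π ω)⁻¹ := by
      rw [mul_inv_rev, cs.inv_simple]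
    rw [e, cs.length_inv, cs.length_inv]
    exact h
  have hmem := simple_mem_rightInvSeq cs hrev h2
  rw [cs.rightInvSeq_reverse, List.mem_reverse] at hmem
  obtain ⟨k, hk, hget⟩ := List.getElem_of_mem hmem
  have hk' : k < ω.length := by rwa [cs.length_leftInvSeq] at hk
  refine ⟨k, hk', ?_⟩
  have hw := cs.getD_leftInvSeq_mul_wordProd ω k
  rwa [getD_eq_getElem' _ _ hk, hget] at hw



lemma exists_reduced_word_sub (n : ℕ) : ∀ ω : List B, ω.length ≤ n →
    ∃ ω' : List B, cs.IsReduced ω' ∧ π ω' = π ω ∧ ∀ b ∈ ω', b ∈ ω := by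
  induction n with
  | zero =>
    intro ω h
    have : ω = [] := List.length_eq_zero_iff.mp (by omega)
    subst this
    exact ⟨[], by simp [CoxeterSystem.IsReduced], rfl, by simp⟩
  | succ n ih =>
    intro ω hlen
    by_cases hred : cs.IsReduced ω
    · exact ⟨ω, hred, rfl, fun b hb => hb⟩
    · have hle := cs.length_wordProd_le ω
      have hne : ω ≠ [] := by
        rintro rfl
        exact hred (by simp [CoxeterSystem.IsReduced])
      have hlenpos : 0 < ω.length := List.length_pos_iff.mpr hne
      have hex : ∃ k, ¬ cs.IsReduced (ω.take (k+1)) := by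
        refine ⟨ω.length - 1, ?_⟩
        have htake : ω.take (ω.length - 1 + 1) = ω := by
          rw [Nat.sub_add_cancel hlenpos, List.take_length]
        rw [htake]
        exact hred
      set k := Nat.find hex with hkdef
      have hbad : ¬ cs.IsReduced (ω.take (k+1)) := Nat.find_spec hex
      have htk : cs.IsReduced (ω.take k) := by
        rcases Nat.eq_zero_or_pos k with h0 | h0
        · rw [h0]
          simp [CoxeterSystem.IsReduced]
        · have hmin := Nat.find_min hex (m := k - 1) (by omega)
          rw [not_not] at hmin
          have : k - 1 + 1 = k := by omega
          rwa [this] at hmin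
      have hklt : k < ω.length := by
        have := Nat.find_min' hex (by
          have htake : ω.take (ω.length - 1 + 1) = ω := by
            rw [Nat.sub_add_cancel hlenpos, List.take_length]
          rw [htake]
          exact hred)
        omega
      have hlenk : (ω.take k).length = k := by
        rw [List.length_take]
        omega
      have htksucc : ω.take (k+1) = ω.take k ++ [ω[k]] := by
        rw [List.take_succ, List.getElem?_eq_getElem hklt]
        rfl
      have hπsucc : π (ω.take (k+1)) = π (ω.take k) * s (ω[k]) := by
        rw [htksucc, cs.wordProd_append, cs.wordProd_singleton]
      have hlenksucc : (ω.take (k+1)).length = k + 1 := by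
        rw [List.length_take]
        omega
      have hlx : ℓ (π (ω.take k)) = k := by
        have := htk
        rwa [CoxeterSystem.IsReduced, hlenk] at this
      have hx : ℓ (π (ω.take k) * s (ω[k])) < ℓ (π (ω.take k)) := by
        rcases cs.length_mul_simple (π (ω.take k)) (ω[k]) with h' | h'
        · exfalso
          apply hbad
          rw [CoxeterSystem.IsReduced, hπsucc, h', hlx, hlenksucc]
        · omega
      obtain ⟨p, hp, herase⟩ := rightExchange cs htk hx
      rw [hlenk] at hp
      set ω₂ := ((ω.take k).eraseIdx p) ++ ω.drop (k+1) with hω₂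
      have hπ2 : π ω₂ = π ω := by
        rw [hω₂, cs.wordProd_append, ← herase]
        conv_rhs => rw [← List.take_append_drop (k+1) ω]
        rw [cs.wordProd_append, hπsucc]
      have herlen : ((ω.take k).eraseIdx p).length + 1 = k := by
        rw [List.length_eraseIdx_add_one (by rwa [hlenk])]
        exact hlenk
      have hlen2 : ω₂.length + 2 = ω.length := by
        rw [hω₂, List.length_append, List.length_drop]
        omega
      obtain ⟨ω', h1, h2, h3⟩ := ih ω₂ (by omega)
      refine ⟨ω', h1, h2.trans hπ2, fun b hb => ?_⟩
      have hb2 := h3 b hb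
      rw [hω₂] at hb2
      rcases List.mem_append.mp hb2 with hb3 | hb3
      · exact List.mem_of_mem_take (List.mem_of_mem_eraseIdx hb3)
      · exact List.mem_of_mem_drop hb3

lemma wordProd_mem_closure {J : Set B} {ω : List B} (hω : ∀ b ∈ ω, b ∈ J) :
    π ω ∈ Subgroup.closure (cs.simple '' J) := by
  induction ω with
  | nil =>
    rw [cs.wordProd_nil]
    exact one_mem _
  | cons i ω ih =>
    rw [cs.wordProd_cons]
    exact mul_mem (Subgroup.subset_closure ⟨i, hω i (List.mem_cons_self (a := i) (l := ω)), rfl⟩)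
      (ih fun b hb => hω b (List.mem_cons_of_mem _ hb))

lemma exists_word_of_mem_closure {J : Set B} {x : W}
    (hx : x ∈ Subgroup.closure (cs.simple '' J)) :
    ∃ ω : List B, (∀ b ∈ ω, b ∈ J) ∧ π ω = x := by
  induction hx using Subgroup.closure_induction with
  | mem x hxk =>
    obtain ⟨j, hj, rfl⟩ := hxk
    exact ⟨[j], by simpa using hj, cs.wordProd_singleton j⟩
  | one => exact ⟨[], by simp, cs.wordProd_nil⟩
  | mul x y hx hy ihx ihy =>
    obtain ⟨ω1, h1, rfl⟩ := ihx
    obtain ⟨ω2, h2, rfl⟩ := ihy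
    refine ⟨ω1 ++ ω2, ?_, cs.wordProd_append ω1 ω2⟩
    intro b hb
    rcases List.mem_append.mp hb with h | h
    · exact h1 b h
    · exact h2 b h
  | inv x hx ihx =>
    obtain ⟨ω1, h1, rfl⟩ := ihx
    exact ⟨ω1.reverse, fun b hb => h1 b (List.mem_reverse.mp hb), cs.wordProd_reverse ω1⟩

lemma exists_reduced_word_J {J : Set B} {u : W}
    (hu : u ∈ Subgroup.closure (cs.simple '' J)) :
    ∃ ω, (∀ b ∈ ω, b ∈ J) ∧ cs.IsReduced ω ∧ π ω = u := by
  obtain ⟨ω, hω, rfl⟩ := exists_word_of_mem_closure cs hu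
  obtain ⟨ω', h1, h2, h3⟩ := exists_reduced_word_sub cs ω.length ω le_rfl
  exact ⟨ω', fun b hb => hω b (h3 b hb), h1, h2⟩

lemma exists_descent_J {J : Set B} {u : W}
    (hu : u ∈ Subgroup.closure (cs.simple '' J)) (hne : u ≠ 1) :
    ∃ j ∈ J, ℓ (u * s j) + 1 = ℓ u := by
  obtain ⟨ω, hJ, hred, rfl⟩ := exists_reduced_word_J cs hu
  have hne' : ω ≠ [] := by
    rintro rfl
    exact hne (cs.wordProd_nil)
  set j := ω.getLast hne' with hj
  have hω : ω = ω.dropLast ++ [j] := (List.dropLast_append_getLast hne').symm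
  have hcancel : π ω * s j = π ω.dropLast := by
    conv_lhs => rw [hω]
    rw [cs.wordProd_append, cs.wordProd_singleton, cs.simple_mul_simple_cancel_right]
  have hlt : ℓ (π ω * s j) < ℓ (π ω) := by
    rw [hcancel]
    calc ℓ (π ω.dropLast) ≤ ω.dropLast.length := cs.length_wordProd_le _
      _ = ω.length - 1 := by rw [List.length_dropLast]
      _ < ω.length := by
          have := List.length_pos_iff.mpr hne'
          omega
      _ = ℓ (π ω) := hred.symm
  refine ⟨j, hJ j (List.getLast_mem hne'), ?_⟩
  rcases cs.length_mul_simple (π ω) j with h' | h'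
  · omega
  · exact h'



lemma length_mul_of_min {J : Set B} (d : W)
    (hmin : ∀ v ∈ Subgroup.closure (cs.simple '' J), ℓ d ≤ ℓ (d * v)) :
    ∀ u ∈ Subgroup.closure (cs.simple '' J), ℓ (d * u) = ℓ d + ℓ u := by
  have key : ∀ n, ∀ u ∈ Subgroup.closure (cs.simple '' J), ℓ u = n →
      ℓ (d * u) = ℓ d + ℓ u := by
    intro n
    induction n using Nat.strong_induction_on with
    | _ n ihn =>
      intro u hu hlu
      by_cases hu1 : u = 1
      · subst hu1; simp
      obtain ⟨j, hjJ, hdesc⟩ := exists_descent_J cs hu hu1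
      set u' := u * s j with hu'def
      have hu'mem : u' ∈ Subgroup.closure (cs.simple '' J) :=
        mul_mem hu (Subgroup.subset_closure ⟨j, hjJ, rfl⟩)
      have hlu' : ℓ u' + 1 = ℓ u := hdesc
      have ih1 : ℓ (d * u') = ℓ d + ℓ u' := ihn (ℓ u') (by omega) u' hu'mem rfl
      have huu' : u = u' * s j := by
        rw [hu'def, cs.simple_mul_simple_cancel_right]
      have hclaim : ℓ (d * u' * s j) = ℓ (d * u') + 1 := by
        rcases cs.length_mul_simple (d * u') j with h' | h'
        · exact h'
        · exfalso
          obtain ⟨ωd, hωdlen, hωdprod⟩ := cs.exists_reduced_word d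
          obtain ⟨ωu, hωulen, hωuprod⟩ := cs.exists_reduced_word u'
          replace hωdlen : ωd.length = ℓ d := by rw [hωdprod]; exact hωdlen.symm
          replace hωulen : ωu.length = ℓ u' := by rw [hωuprod]; exact hωulen.symm
          have hc : π (ωd ++ ωu) = d * u' := by
            rw [cs.wordProd_append, ← hωdprod, ← hωuprod]
          have hcred : cs.IsReduced (ωd ++ ωu) := by
            rw [CoxeterSystem.IsReduced, hc, List.length_append, hωdlen, hωulen, ih1]
          have hlt : ℓ (π (ωd ++ ωu) * s j) < ℓ (π (ωd ++ ωu)) := by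
            rw [hc]; omega
          obtain ⟨p, hp, herase⟩ := rightExchange cs hcred hlt
          rw [hc] at herase
          by_cases hpd : p < ωd.length
          · rw [List.eraseIdx_append_of_lt_length hpd, cs.wordProd_append, ← hωuprod]
              at herase
            have h2 : d * (u' * s j * u'⁻¹) = π (ωd.eraseIdx p) := by
              have h3 := congrArg (fun x => x * u'⁻¹) herase
              simp only [mul_assoc, mul_inv_cancel, mul_one] at h3
              rw [← h3]
              group
            have hvmem : u' * s j * u'⁻¹ ∈ Subgroup.closure (cs.simple '' J) :=
              mul_mem (mul_mem hu'mem (Subgroup.subset_closure ⟨j, hjJ, rfl⟩))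
                (inv_mem hu'mem)
            have hlen' : ℓ (d * (u' * s j * u'⁻¹)) ≤ (ωd.eraseIdx p).length := by
              rw [h2]; exact cs.length_wordProd_le _
            have hel := List.length_eraseIdx_add_one hpd
            have := hmin _ hvmem
            omega
          · push_neg at hpd
            rw [List.eraseIdx_append_of_length_le hpd, cs.wordProd_append, ← hωdprod]
              at herase
            have h2 : u' * s j = π (ωu.eraseIdx (p - ωd.length)) := by
              apply mul_left_cancel (a := d)
              rw [← mul_assoc]
              exact herase
            have hplen : p - ωd.length < ωu.length := by
              rw [List.length_append] at hp; omega
            have hle2 : ℓ (u' * s j) ≤ (ωu.eraseIdx (p - ωd.length)).length := by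
              rw [h2]; exact cs.length_wordProd_le _
            have hel := List.length_eraseIdx_add_one hplen
            rw [← huu'] at hle2
            omega
      have hfinal : ℓ (u' * s j) = ℓ u' + 1 := by
        rw [← huu']
        omega
      rw [huu', ← mul_assoc, hclaim, ih1, hfinal]
      omega
  intro u hu
  exact key (ℓ u) u hu rfl

lemma length_mul_of_DJ {J : Set B} {w : W} (hw : w ∈ cs.DJ J) :
    ∀ u ∈ Subgroup.closure (cs.simple '' J), ℓ (w * u) = ℓ w + ℓ u := by
  have hne : {n | ∃ v ∈ Subgroup.closure (cs.simple '' J), ℓ (w * v) = n}.Nonempty :=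
    ⟨ℓ w, 1, one_mem _, by simp⟩
  obtain ⟨v₀, hv₀mem, hv₀len⟩ := Nat.sInf_mem hne
  have hmin : ∀ v ∈ Subgroup.closure (cs.simple '' J), ℓ (w * v₀) ≤ ℓ ((w * v₀) * v) := by
    intro v hv
    rw [hv₀len, mul_assoc]
    exact Nat.sInf_le ⟨v₀ * v, mul_mem hv₀mem hv, rfl⟩
  have hadd := length_mul_of_min cs (w * v₀) hmin
  have hv₀1 : v₀ = 1 := by
    by_contra hne1
    have hinv1 : v₀⁻¹ ≠ 1 := by simpa using hne1
    obtain ⟨j, hjJ, hdesc⟩ := exists_descent_J cs (inv_mem hv₀mem) hinv1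
    have h2 : ℓ w = ℓ (w * v₀) + ℓ v₀⁻¹ := by
      have h1 : w = (w * v₀) * v₀⁻¹ := by group
      conv_lhs => rw [h1]
      exact hadd v₀⁻¹ (inv_mem hv₀mem)
    have h3 : ℓ (w * s j) = ℓ (w * v₀) + ℓ (v₀⁻¹ * s j) := by
      have h1 : w * s j = (w * v₀) * (v₀⁻¹ * s j) := by group
      rw [h1]
      exact hadd _ (mul_mem (inv_mem hv₀mem) (Subgroup.subset_closure ⟨j, hjJ, rfl⟩))
    have hwj := hw j hjJ
    omega
  rw [hv₀1, mul_one] at hadd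
  exact hadd

lemma deodhar {J : Set B} {w : W} (hw : w ∈ cs.DJ J) (i : B)
    (hasc : ℓ w < ℓ (s i * w)) (hnot : s i * w ∉ cs.DJ J) :
    ∃ j ∈ J, s i * w = w * s j := by
  simp only [CoxeterSystem.DJ, Set.mem_setOf_eq, not_forall, not_lt] at hnot
  obtain ⟨j, hjJ, hle⟩ := hnot
  have hlt : ℓ (s i * w * s j) + 1 = ℓ (s i * w) := by
    rcases cs.length_mul_simple (s i * w) j with h' | h' <;> omega
  have hsiw : ℓ (s i * w) = ℓ w + 1 := by
    rcases cs.length_simple_mul w i with h' | h' <;> omega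
  have hwj : ℓ (w * s j) = ℓ w + 1 := by
    have := hw j hjJ
    rcases cs.length_mul_simple w j with h' | h' <;> omega
  obtain ⟨ωw, hωwlen, hωwprod⟩ := cs.exists_reduced_word w
  replace hωwlen : ωw.length = ℓ w := by rw [hωwprod]; exact hωwlen.symm
  have hc : π (ωw ++ [j]) = w * s j := by
    rw [cs.wordProd_append, cs.wordProd_singleton, ← hωwprod]
  have hcred : cs.IsReduced (ωw ++ [j]) := by
    rw [CoxeterSystem.IsReduced, hc, hwj, List.length_append, List.length_singleton]
    omega
  have hlt2 : ℓ (s i * π (ωw ++ [j])) < ℓ (π (ωw ++ [j])) := by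
    rw [hc, ← mul_assoc]
    omega
  obtain ⟨k, hk, herase⟩ := leftExchange cs hcred hlt2
  rw [hc] at herase
  rw [List.length_append, List.length_singleton] at hk
  by_cases hkd : k < ωw.length
  · exfalso
    rw [List.eraseIdx_append_of_lt_length hkd, cs.wordProd_append,
      cs.wordProd_singleton, ← mul_assoc] at herase
    have h2 : s i * w = π (ωw.eraseIdx k) := mul_right_cancel herase
    have hle2 : ℓ (s i * w) ≤ (ωw.eraseIdx k).length := by
      rw [h2]; exact cs.length_wordProd_le _
    have hel := List.length_eraseIdx_add_one hkd
    omega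
  · have hk0 : k = ωw.length := by omega
    refine ⟨j, hjJ, ?_⟩
    rw [hk0, List.eraseIdx_append_of_length_le (le_refl _), Nat.sub_self] at herase
    simp only [List.eraseIdx, List.append_nil] at herase
    rw [← hωwprod] at herase
    have h3 := congrArg (fun x => x * s j) herase
    simp only [mul_assoc, cs.simple_mul_simple_self, mul_one] at h3
    exact h3

lemma simple_mul_longest {J : Set B} {wJ : W}
    (hwJmem : wJ ∈ Subgroup.closure (cs.simple '' J))
    (hwJlong : ∀ u ∈ Subgroup.closure (cs.simple '' J), ℓ u ≤ ℓ wJ)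
    {j : B} (hj : j ∈ J) : ℓ (s j * wJ) + 1 = ℓ wJ := by
  have hmem : s j * wJ ∈ Subgroup.closure (cs.simple '' J) :=
    mul_mem (Subgroup.subset_closure ⟨j, hj, rfl⟩) hwJmem
  have hle := hwJlong _ hmem
  have hne := cs.length_simple_mul_ne wJ j
  rcases cs.length_simple_mul wJ j with h' | h' <;> omega


end
end CoxAux

/-- Let `W_J` be finite with longest element `wJ`.  For `w ∈ D_J` and a simple
reflection `s`, we have `ℓ(s·w·wJ) < ℓ(w·wJ)` iff either `ℓ(sw) < ℓ(w)`, or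
`ℓ(sw) > ℓ(w)` and `sw ∉ D_J`.  That is, the left descent set of `w·wJ` is
`SD(w) ∪ WD_J(w)`. -/
theorem leftDescent_mul_longest_iff {B W : Type*} [Group W] {M : CoxeterMatrix B}
    (cs : CoxeterSystem M W) (J : Set B) (wJ : W)
    (hfin : (Subgroup.closure (cs.simple '' J) : Set W).Finite)
    (hwJmem : wJ ∈ Subgroup.closure (cs.simple '' J))
    (hwJlong : ∀ u ∈ Subgroup.closure (cs.simple '' J), cs.length u ≤ cs.length wJ)
    (w : W) (hw : w ∈ cs.DJ J) (i : B) :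
    cs.length (cs.simple i * (w * wJ)) < cs.length (w * wJ) ↔
      (cs.length (cs.simple i * w) < cs.length w ∨
        (cs.length w < cs.length (cs.simple i * w) ∧ cs.simple i * w ∉ cs.DJ J)) := by
  have hadd := CoxAux.length_mul_of_DJ cs hw
  have hwwJ : cs.length (w * wJ) = cs.length w + cs.length wJ := hadd wJ hwJmem
  rcases Nat.lt_or_ge (cs.length (cs.simple i * w)) (cs.length w) with hlt | hge
  · have h1 : cs.length (cs.simple i * (w * wJ)) < cs.length (w * wJ) := by
      have hle : cs.length (cs.simple i * (w * wJ))
          ≤ cs.length (cs.simple i * w) + cs.length wJ := by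
        rw [← mul_assoc]
        exact cs.length_mul_le _ _
      omega
    exact iff_of_true h1 (Or.inl hlt)
  · have hasc : cs.length w < cs.length (cs.simple i * w) :=
      lt_of_le_of_ne hge (Ne.symm (cs.length_simple_mul_ne w i))
    by_cases hD : cs.simple i * w ∈ cs.DJ J
    · have hadd2 := CoxAux.length_mul_of_DJ cs hD wJ hwJmem
      apply iff_of_false
      · rw [← mul_assoc, hadd2, hwwJ]
        omega
      · rintro (h | ⟨h1, h2⟩)
        · omega
        · exact h2 hD
    · obtain ⟨j, hjJ, heq⟩ := CoxAux.deodhar cs hw i hasc hD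
      have hsjwJ : cs.length (cs.simple j * wJ) + 1 = cs.length wJ :=
        CoxAux.simple_mul_longest cs hwJmem hwJlong hjJ
      have hmem2 : cs.simple j * wJ ∈ Subgroup.closure (cs.simple '' J) :=
        mul_mem (Subgroup.subset_closure ⟨j, hjJ, rfl⟩) hwJmem
      have h1 : cs.length (cs.simple i * (w * wJ)) < cs.length (w * wJ) := by
        have he : cs.simple i * (w * wJ) = w * (cs.simple j * wJ) := by
          rw [← mul_assoc, heq, mul_assoc]
        rw [he, hadd _ hmem2, hwwJ]
        omega
      exact iff_of_true h1 (Or.inr ⟨hasc, hD⟩)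
end

section
/- Let λ be a partition of n, tab_λ the column superstandard tableau, and tab^λ the row superstandard tableau (filling rows in order left to right). Define v_λ ∈ S_n by tab^λ = v_λ·tab_λ. Then a λ-tableau t = w·tab_λ is standard (rows and columns both increasing) if and only if w ≤_L v_λ in the left weak Bruhat order on S_n. -/
def IsColSuperstandard (μ : YoungDiagram) (n : ℕ)
    (t : {c // c ∈ μ.cells} ≃ Fin n) : Prop :=
  ∀ c : {c // c ∈ μ.cells},
    ((t c : Fin n) : ℕ) = (∑ h ∈ Finset.range c.1.2, μ.colLen h) + c.1.1

/-- `t` is the row superstandard tableau `tab^λ`: rows are filled in order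
from left to right. -/
def IsRowSuperstandard (μ : YoungDiagram) (n : ℕ)
    (t : {c // c ∈ μ.cells} ≃ Fin n) : Prop :=
  ∀ c : {c // c ∈ μ.cells},
    ((t c : Fin n) : ℕ) = (∑ h ∈ Finset.range c.1.1, μ.rowLen h) + c.1.2

def invLen {n : ℕ} (w : Equiv.Perm (Fin n)) : ℕ :=
  (Finset.univ.filter fun p : Fin n × Fin n => p.1 < p.2 ∧ w p.2 < w p.1).card

/-- The left weak Bruhat order on `S_n`: `u ≤_L w` iff `ℓ(w u⁻¹) + ℓ(u) = ℓ(w)`. -/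
def LeftWeakLE {n : ℕ} (u w : Equiv.Perm (Fin n)) : Prop :=
  invLen (w * u⁻¹) + invLen u = invLen w

/-- A standard tableau: entries increase along rows and down columns. -/
def IsStandard (μ : YoungDiagram) (n : ℕ)
    (t : {c // c ∈ μ.cells} ≃ Fin n) : Prop :=
  (∀ c c' : {c // c ∈ μ.cells}, (c.1).1 = (c'.1).1 → (c.1).2 < (c'.1).2 → t c < t c') ∧
  (∀ c c' : {c // c ∈ μ.cells}, (c.1).2 = (c'.1).2 → (c.1).1 < (c'.1).1 → t c < t c')
open Finset

section WeakOrder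
variable {n : ℕ}

private lemma leftWeakLE_iff (u v : Equiv.Perm (Fin n)) :
    LeftWeakLE u v ↔ ∀ i j : Fin n, i < j → u j < u i → v j < v i := by
  classical
  set a := v * u⁻¹ with ha
  have hva : ∀ i, a (u i) = v i := by
    intro i; simp [ha, Equiv.Perm.mul_apply]
  set X : Finset (Fin n × Fin n) :=
    univ.filter fun p => p.1 < p.2 ∧ u p.2 < u p.1 ∧ v p.1 < v p.2 with hX
  set Y : Finset (Fin n × Fin n) :=
    univ.filter fun p => p.1 < p.2 ∧ u p.1 < u p.2 ∧ v p.2 < v p.1 with hY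
  set A1 : Finset (Fin n × Fin n) :=
    univ.filter fun q => q.1 < q.2 ∧ a q.2 < a q.1 ∧ u⁻¹ q.1 < u⁻¹ q.2 with hA1
  set A2 : Finset (Fin n × Fin n) :=
    univ.filter fun q => q.1 < q.2 ∧ a q.2 < a q.1 ∧ u⁻¹ q.2 < u⁻¹ q.1 with hA2
  have hYA1 : Y.card = A1.card := by
    apply Finset.card_nbij' (fun p => (u p.1, u p.2)) (fun q => (u⁻¹ q.1, u⁻¹ q.2))
    · intro p hp
      simp only [hY, mem_coe, mem_filter, mem_univ, true_and] at hp
      simp only [hA1, mem_coe, mem_filter, mem_univ, true_and]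
      refine ⟨hp.2.1, ?_, by simpa using hp.1⟩
      rw [hva, hva]; exact hp.2.2
    · intro q hq
      simp only [hA1, mem_coe, mem_filter, mem_univ, true_and] at hq
      simp only [hY, mem_coe, mem_filter, mem_univ, true_and]
      refine ⟨hq.2.2, by simpa using hq.1, ?_⟩
      have := hq.2.1
      rwa [show q.1 = u (u⁻¹ q.1) by simp, show q.2 = u (u⁻¹ q.2) by simp, hva, hva] at this
    · intro p _; simp
    · intro q _; simp
  have hXA2 : X.card = A2.card := by
    apply Finset.card_nbij' (fun p => (u p.2, u p.1)) (fun q => (u⁻¹ q.2, u⁻¹ q.1))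
    · intro p hp
      simp only [hX, mem_coe, mem_filter, mem_univ, true_and] at hp
      simp only [hA2, mem_coe, mem_filter, mem_univ, true_and]
      refine ⟨hp.2.1, ?_, by simpa using hp.1⟩
      rw [hva, hva]; exact hp.2.2
    · intro q hq
      simp only [hA2, mem_coe, mem_filter, mem_univ, true_and] at hq
      simp only [hX, mem_coe, mem_filter, mem_univ, true_and]
      refine ⟨hq.2.2, by simpa using hq.1, ?_⟩
      have := hq.2.1
      rwa [show q.1 = u (u⁻¹ q.1) by simp, show q.2 = u (u⁻¹ q.2) by simp, hva, hva] at this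
    · intro p _; simp
    · intro q _; simp
  have hInva : invLen a = A1.card + A2.card := by
    have hunion : (univ.filter fun p : Fin n × Fin n => p.1 < p.2 ∧ a p.2 < a p.1)
        = A1 ∪ A2 := by
      ext q
      simp only [hA1, hA2, mem_union, mem_filter, mem_univ, true_and]
      constructor
      · rintro ⟨h1, h2⟩
        have hne : u⁻¹ q.1 ≠ u⁻¹ q.2 := fun h => (ne_of_lt h1) (u⁻¹.injective h)
        rcases lt_or_gt_of_ne hne with h | h
        · exact Or.inl ⟨h1, h2, h⟩
        · exact Or.inr ⟨h1, h2, h⟩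
      · rintro (⟨h1, h2, _⟩ | ⟨h1, h2, _⟩) <;> exact ⟨h1, h2⟩
    have hdisj : Disjoint A1 A2 := by
      rw [Finset.disjoint_left]
      intro q h1 h2
      simp only [hA1, mem_filter, mem_univ, true_and] at h1
      simp only [hA2, mem_filter, mem_univ, true_and] at h2
      exact absurd h2.2.2 (asymm h1.2.2)
    rw [invLen, hunion, Finset.card_union_of_disjoint hdisj]
  have hmain : invLen v + X.card = invLen u + Y.card := by
    have hunion : (univ.filter fun p : Fin n × Fin n => p.1 < p.2 ∧ v p.2 < v p.1) ∪ X
        = (univ.filter fun p : Fin n × Fin n => p.1 < p.2 ∧ u p.2 < u p.1) ∪ Y := by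
      ext p
      simp only [hX, hY, mem_union, mem_filter, mem_univ, true_and]
      by_cases h12 : p.1 < p.2
      · have hu : u p.1 < u p.2 ∨ u p.2 < u p.1 :=
          lt_or_gt_of_ne (fun h => (ne_of_lt h12) (u.injective h))
        have hv : v p.1 < v p.2 ∨ v p.2 < v p.1 :=
          lt_or_gt_of_ne (fun h => (ne_of_lt h12) (v.injective h))
        constructor
        · rintro (⟨_, h⟩ | ⟨_, h1, h2⟩)
          · rcases hu with h' | h'
            · exact Or.inr ⟨h12, h', h⟩
            · exact Or.inl ⟨h12, h'⟩
          · exact Or.inl ⟨h12, h1⟩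
        · rintro (⟨_, h⟩ | ⟨_, h1, h2⟩)
          · rcases hv with h' | h'
            · exact Or.inr ⟨h12, h, h'⟩
            · exact Or.inl ⟨h12, h'⟩
          · exact Or.inl ⟨h12, h2⟩
      · tauto
    have hd1 : Disjoint (univ.filter fun p : Fin n × Fin n => p.1 < p.2 ∧ v p.2 < v p.1) X := by
      rw [Finset.disjoint_left]
      intro p h1 h2
      simp only [mem_filter, mem_univ, true_and] at h1
      simp only [hX, mem_filter, mem_univ, true_and] at h2
      exact absurd h2.2.2 (asymm h1.2)
    have hd2 : Disjoint (univ.filter fun p : Fin n × Fin n => p.1 < p.2 ∧ u p.2 < u p.1) Y := by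
      rw [Finset.disjoint_left]
      intro p h1 h2
      simp only [mem_filter, mem_univ, true_and] at h1
      simp only [hY, mem_filter, mem_univ, true_and] at h2
      exact absurd h2.2.1 (asymm h1.2)
    have := congrArg Finset.card hunion
    rwa [Finset.card_union_of_disjoint hd1, Finset.card_union_of_disjoint hd2] at this
  have hLW : LeftWeakLE u v ↔ X.card = 0 := by
    unfold LeftWeakLE
    rw [← ha, hInva, ← hYA1, ← hXA2]
    omega
  rw [hLW, Finset.card_eq_zero, Finset.eq_empty_iff_forall_notMem]
  constructor
  · intro h i j hij huji
    have h' := h (i, j)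
    simp only [hX, mem_filter, mem_univ, true_and] at h'
    push_neg at h'
    have hne : v i ≠ v j := fun hh => (ne_of_lt hij) (v.injective hh)
    exact lt_of_le_of_ne (h' hij huji) fun hh => hne hh.symm
  · intro h p hp
    simp only [hX, mem_filter, mem_univ, true_and] at hp
    exact absurd hp.2.2 (asymm (h p.1 p.2 hp.1 hp.2.1))

end WeakOrder
section Tableau

variable (μ : YoungDiagram) (n : ℕ)

private def ColLess (c c' : {c // c ∈ μ.cells}) : Prop :=
  c.1.2 < c'.1.2 ∨ (c.1.2 = c'.1.2 ∧ c.1.1 < c'.1.1)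

private def RowLess (c c' : {c // c ∈ μ.cells}) : Prop :=
  c.1.1 < c'.1.1 ∨ (c.1.1 = c'.1.1 ∧ c.1.2 < c'.1.2)

private lemma tcol_lt_of (tcol : {c // c ∈ μ.cells} ≃ Fin n)
    (htcol : IsColSuperstandard μ n tcol) (c c' : {c // c ∈ μ.cells})
    (h : ColLess μ c c') : tcol c < tcol c' := by
  rw [Fin.lt_def]
  rw [htcol c, htcol c']
  rcases h with h | ⟨h1, h2⟩
  · have hrow : c.1.1 < μ.colLen c.1.2 := by
      have := (Finset.mem_coe.mpr c.2)
      have hm : (c.1.1, c.1.2) ∈ μ := (YoungDiagram.mem_cells _).mp c.2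
      exact YoungDiagram.mem_iff_lt_colLen.mp hm
    have hsum : (∑ h ∈ Finset.range c.1.2, μ.colLen h) + μ.colLen c.1.2
        ≤ ∑ h ∈ Finset.range c'.1.2, μ.colLen h := by
      rw [← Finset.sum_range_succ]
      exact Finset.sum_le_sum_of_subset (Finset.range_subset_range.mpr h)
    omega
  · rw [h1]; omega

private lemma trow_lt_of (trow : {c // c ∈ μ.cells} ≃ Fin n)
    (htrow : IsRowSuperstandard μ n trow) (c c' : {c // c ∈ μ.cells})
    (h : RowLess μ c c') : trow c < trow c' := by
  rw [Fin.lt_def]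
  rw [htrow c, htrow c']
  rcases h with h | ⟨h1, h2⟩
  · have hrow : c.1.2 < μ.rowLen c.1.1 := by
      have hm : (c.1.1, c.1.2) ∈ μ := (YoungDiagram.mem_cells _).mp c.2
      exact YoungDiagram.mem_iff_lt_rowLen.mp hm
    have hsum : (∑ h ∈ Finset.range c.1.1, μ.rowLen h) + μ.rowLen c.1.1
        ≤ ∑ h ∈ Finset.range c'.1.1, μ.rowLen h := by
      rw [← Finset.sum_range_succ]
      exact Finset.sum_le_sum_of_subset (Finset.range_subset_range.mpr h)
    omega
  · rw [h1]; omega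

private lemma tcol_lt_iff (tcol : {c // c ∈ μ.cells} ≃ Fin n)
    (htcol : IsColSuperstandard μ n tcol) (c c' : {c // c ∈ μ.cells}) :
    tcol c < tcol c' ↔ ColLess μ c c' := by
  constructor
  · intro h
    rcases lt_trichotomy c.1.2 c'.1.2 with h2 | h2 | h2
    · exact Or.inl h2
    · rcases lt_trichotomy c.1.1 c'.1.1 with h1 | h1 | h1
      · exact Or.inr ⟨h2, h1⟩
      · exfalso
        have hc : c = c' := Subtype.ext (Prod.ext h1 h2)
        rw [hc] at h
        exact lt_irrefl _ h
      · exact absurd h (asymm (tcol_lt_of μ n tcol htcol c' c (Or.inr ⟨h2.symm, h1⟩)))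
    · exact absurd h (asymm (tcol_lt_of μ n tcol htcol c' c (Or.inl h2)))
  · exact tcol_lt_of μ n tcol htcol c c'

private lemma trow_lt_iff (trow : {c // c ∈ μ.cells} ≃ Fin n)
    (htrow : IsRowSuperstandard μ n trow) (c c' : {c // c ∈ μ.cells}) :
    trow c < trow c' ↔ RowLess μ c c' := by
  constructor
  · intro h
    rcases lt_trichotomy c.1.1 c'.1.1 with h1 | h1 | h1
    · exact Or.inl h1
    · rcases lt_trichotomy c.1.2 c'.1.2 with h2 | h2 | h2
      · exact Or.inr ⟨h1, h2⟩
      · exfalso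
        have hc : c = c' := Subtype.ext (Prod.ext h1 h2)
        rw [hc] at h
        exact lt_irrefl _ h
      · exact absurd h (asymm (trow_lt_of μ n trow htrow c' c (Or.inr ⟨h1.symm, h2⟩)))
    · exact absurd h (asymm (trow_lt_of μ n trow htrow c' c (Or.inl h1)))
  · exact trow_lt_of μ n trow htrow c c'

end Tableau

/-- `w · tab_λ` is standard iff `w ≤_L v_λ`, where `v_λ` is defined by
`tab^λ = v_λ · tab_λ`. -/
theorem standard_iff_leftWeak_le_vlambda (μ : YoungDiagram) (n : ℕ)
    (hcard : μ.card = n) (tcol trow : {c // c ∈ μ.cells} ≃ Fin n)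
    (htcol : IsColSuperstandard μ n tcol) (htrow : IsRowSuperstandard μ n trow)
    (vlam : Equiv.Perm (Fin n)) (hv : trow = tcol.trans vlam)
    (w : Equiv.Perm (Fin n)) :
    IsStandard μ n (tcol.trans w) ↔ LeftWeakLE w vlam := by
  rw [leftWeakLE_iff w vlam]
  have hvc : ∀ c, vlam (tcol c) = trow c := fun c => by rw [hv]; rfl
  constructor
  · rintro ⟨hrows, hcols⟩ i j hij hw
    set c := tcol.symm i with hc
    set c' := tcol.symm j with hc'
    have hci : tcol c = i := tcol.apply_symm_apply i
    have hcj : tcol c' = j := tcol.apply_symm_apply j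
    have hcl : ColLess μ c c' :=
      (tcol_lt_iff μ n tcol htcol c c').mp (by rw [hci, hcj]; exact hij)
    have hw' : w (tcol c') < w (tcol c) := by rw [hci, hcj]; exact hw
    rw [← hci, ← hcj, hvc, hvc]
    apply trow_lt_of μ n trow htrow c' c
    rcases hcl with hB | ⟨h1, h2⟩
    · rcases lt_trichotomy c'.1.1 c.1.1 with hr | hr | hr
      · exact Or.inl hr
      · exfalso
        have := hrows c c' hr.symm hB
        exact absurd this (asymm hw')
      · exfalso
        have hdm : (c.1.1, c'.1.2) ∈ μ.cells := (YoungDiagram.mem_cells _).mpr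
          (μ.up_left_mem (le_of_lt hr) (le_refl _) ((YoungDiagram.mem_cells _).mp c'.2))
        set d : {x // x ∈ μ.cells} := ⟨(c.1.1, c'.1.2), hdm⟩ with hd
        have ha : (tcol.trans w) c < (tcol.trans w) d := hrows c d rfl hB
        have hb : (tcol.trans w) d < (tcol.trans w) c' := hcols d c' rfl hr
        exact absurd (lt_trans ha hb) (asymm hw')
    · exfalso
      have := hcols c c' h1 h2
      exact absurd this (asymm hw')
  · intro h
    constructor
    · intro c c' hr hcl
      have hij : tcol c < tcol c' := tcol_lt_of μ n tcol htcol c c' (Or.inl hcl)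
      rcases lt_trichotomy ((tcol.trans w) c) ((tcol.trans w) c') with hlt | heq | hgt
      · exact hlt
      · exfalso
        have hcc : c = c' := (tcol.trans w).injective heq
        rw [hcc] at hij; exact lt_irrefl _ hij
      · exfalso
        have hv' := h (tcol c) (tcol c') hij hgt
        rw [hvc, hvc] at hv'
        rcases (trow_lt_iff μ n trow htrow c' c).mp hv' with h1 | ⟨h1, h2⟩
        · omega
        · omega
    · intro c c' hcol hrow
      have hij : tcol c < tcol c' := tcol_lt_of μ n tcol htcol c c' (Or.inr ⟨hcol, hrow⟩)
      rcases lt_trichotomy ((tcol.trans w) c) ((tcol.trans w) c') with hlt | heq | hgt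
      · exact hlt
      · exfalso
        have hcc : c = c' := (tcol.trans w).injective heq
        rw [hcc] at hij; exact lt_irrefl _ hij
      · exfalso
        have hv' := h (tcol c) (tcol c') hij hgt
        rw [hvc, hvc] at hv'
        rcases (trow_lt_iff μ n trow htrow c' c).mp hv' with h1 | ⟨h1, h2⟩
        · omega
        · omega
end

section
/- Let λ be a partition of n with conjugate λ'. Let w ∈ S_n and suppose the Robinson-Schensted recording tableau Q(w) equals tab_λ (the column superstandard tableau). Then w(1) > w(2) > ⋯ > w(λ'_1), w(λ'_1+1) > ⋯ > w(λ'_1+λ'_2), and so on: w is strictly decreasing on each consecutive block of sizes λ'_1, λ'_2, …. -/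
/-- Row insertion of `x` into a row: returns the new row and the bumped entry,
if any. -/
def insRow : List ℕ → ℕ → List ℕ × Option ℕ
  | [], x => ([x], none)
  | a :: as, x =>
      if x < a then (x :: as, some a)
      else
        let p := insRow as x
        (a :: p.1, p.2)

/-- Robinson–Schensted row insertion of `x` into a tableau (list of rows). -/
def insertT : List (List ℕ) → ℕ → List (List ℕ)
  | [], x => [[x]]
  | r :: rs, x =>
      match insRow r x with
      | (r', none) => r' :: rs
      | (r', some b) => r' :: insertT rs b

/-- Add the label `k` to the recording tableau `q` in the unique new box of the
shape `sh` (the shape of the insertion tableau after the current insertion). -/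
def addRec : List (List ℕ) → List ℕ → ℕ → List (List ℕ)
  | [], _, k => [[k]]
  | _ :: _, [], k => [[k]]
  | r :: rs, s :: ss, k =>
      if r.length < s then (r ++ [k]) :: rs else r :: addRec rs ss k

/-- The Robinson–Schensted correspondence: `RS w = (P(w), Q(w))`, obtained by
row-inserting the entries of the word `w` in order, recording with `1, 2, …`. -/
def RS (w : List ℕ) : List (List ℕ) × List (List ℕ) :=
  (((List.range w.length).map (· + 1)).zip w).foldl
    (fun pq kx =>
      let p' := insertT pq.1 kx.2
      (p', addRec pq.2 (p'.map List.length) kx.1))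
    ([], [])

/-- The word (in one-line notation, entries `1, …, n`) of a permutation. -/
def wordOf {n : ℕ} (w : Equiv.Perm (Fin n)) : List ℕ :=
  (List.finRange n).map fun k => (w k : ℕ) + 1

/-- `λ'_j`: the number of parts of `l` that exceed `j` (the conjugate
partition). -/
def conjC (l : List ℕ) (j : ℕ) : ℕ := (l.filter fun x => j < x).length

/-- `Σ_{h < j} λ'_h`: the number of entries preceding column `j` of the column
superstandard tableau. -/
def colStart (l : List ℕ) (j : ℕ) : ℕ := ((List.range j).map (conjC l)).sum

/-- The column superstandard tableau `tab_λ` (rows as lists): the entry in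
cell `(i, j)` is `colStart l j + i + 1`, so columns are filled `1, 2, …`
in order from top to bottom. -/
def tabColList (l : List ℕ) : List (List ℕ) :=
  (List.range l.length).map fun i =>
    (List.range (l.getD i 0)).map fun j => colStart l j + i + 1

namespace RSaux

lemma insRow_nil (x : ℕ) : insRow [] x = ([x], none) := rfl

lemma insRow_cons_lt {x a : ℕ} (as : List ℕ) (h : x < a) :
    insRow (a :: as) x = (x :: as, some a) := by simp [insRow, h]

lemma insRow_cons_ge {x a : ℕ} (as : List ℕ) (h : ¬ x < a) :
    insRow (a :: as) x = (a :: (insRow as x).1, (insRow as x).2) := by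
  simp [insRow, h]

lemma insRow_fst_mem (r : List ℕ) (x : ℕ) : ∀ e ∈ (insRow r x).1, e = x ∨ e ∈ r := by
  induction r with
  | nil => simp [insRow]
  | cons a as ih =>
    intro e he
    by_cases h : x < a
    · rw [insRow_cons_lt as h] at he
      rw [List.mem_cons] at he
      rcases he with he | he
      · left; exact he
      · right; simp [he]
    · rw [insRow_cons_ge as h] at he
      rw [List.mem_cons] at he
      rcases he with he | he
      · right; simp [he]
      · rcases ih e he with h2 | h2
        · left; exact h2
        · right; simp [h2]

lemma insRow_snd_mem {r : List ℕ} {x b : ℕ} (h : (insRow r x).2 = some b) : b ∈ r := by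
  induction r with
  | nil => simp [insRow] at h
  | cons a as ih =>
    by_cases hx : x < a
    · rw [insRow_cons_lt as hx] at h
      simp at h; simp [h]
    · rw [insRow_cons_ge as hx] at h
      simp at h
      exact List.mem_cons_of_mem _ (ih h)

lemma insRow_sorted {r : List ℕ} (hs : r.Pairwise (· ≤ ·)) (x : ℕ) :
    (insRow r x).1.Pairwise (· ≤ ·) := by
  induction r with
  | nil => simp [insRow]
  | cons a as ih =>
    rw [List.pairwise_cons] at hs
    by_cases h : x < a
    · rw [insRow_cons_lt as h]
      rw [List.pairwise_cons]
      exact ⟨fun b hb => le_trans h.le (hs.1 b hb), hs.2⟩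
    · rw [insRow_cons_ge as h]
      rw [List.pairwise_cons]
      refine ⟨fun b hb => ?_, ih hs.2⟩
      rcases insRow_fst_mem as x b hb with hb | hb
      · omega
      · exact hs.1 b hb

/-- The row bumping comparison lemma. -/
lemma insRow_bump {r : List ℕ} (hs : r.Pairwise (· ≤ ·)) {x y : ℕ} (hxy : x ≤ y) :
    ((insRow r x).2 = none → (insRow (insRow r x).1 y).2 = none) ∧
    (∀ x' y', (insRow r x).2 = some x' → (insRow (insRow r x).1 y).2 = some y' → x' ≤ y') := by
  induction r generalizing x y with
  | nil =>
    constructor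
    · intro _
      rw [insRow_nil, insRow_cons_ge [] (by omega)]
      simp [insRow]
    · intro x' y' h; simp [insRow] at h
  | cons a as ih =>
    rw [List.pairwise_cons] at hs
    by_cases h : x < a
    · rw [insRow_cons_lt as h]
      constructor
      · intro hc; simp at hc
      · intro x' y' hx' hy'
        simp only [Option.some_inj] at hx'
        subst hx'
        rw [insRow_cons_ge as (by omega)] at hy'
        simp only at hy'
        exact hs.1 y' (insRow_snd_mem hy')
    · rw [insRow_cons_ge as h]
      have hay : ¬ y < a := by omega
      rw [insRow_cons_ge (insRow as x).1 hay]
      exact ih hs.2 hxy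

end RSaux

namespace RSaux

/-- Index of the row where the new box appears when inserting `x` into `P`. -/
def newRow : List (List ℕ) → ℕ → ℕ
  | [], _ => 0
  | r :: rs, x =>
      match (insRow r x).2 with
      | none => 0
      | some b => newRow rs b + 1

lemma newRow_nil (x : ℕ) : newRow [] x = 0 := rfl

lemma newRow_cons_none {r : List ℕ} {x : ℕ} (h : (insRow r x).2 = none) (rs : List (List ℕ)) :
    newRow (r :: rs) x = 0 := by simp [newRow, h]

lemma newRow_cons_some {r : List ℕ} {x b : ℕ} (h : (insRow r x).2 = some b)
    (rs : List (List ℕ)) : newRow (r :: rs) x = newRow rs b + 1 := by simp [newRow, h]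

lemma insertT_cons_none {r : List ℕ} {x : ℕ} {r' : List ℕ} (h : insRow r x = (r', none))
    (rs : List (List ℕ)) : insertT (r :: rs) x = r' :: rs := by
  simp [insertT, h]

lemma insertT_cons_some {r : List ℕ} {x b : ℕ} {r' : List ℕ} (h : insRow r x = (r', some b))
    (rs : List (List ℕ)) : insertT (r :: rs) x = r' :: insertT rs b := by
  simp [insertT, h]

/-- Row bumping lemma for full insertion: inserting a weakly larger element
next, the new box appears in a weakly earlier row. -/
lemma newRow_le_newRow {P : List (List ℕ)} (hs : ∀ r ∈ P, r.Pairwise (· ≤ ·))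
    {x y : ℕ} (hxy : x ≤ y) : newRow (insertT P x) y ≤ newRow P x := by
  induction P generalizing x y with
  | nil =>
    show newRow [[x]] y ≤ 0
    have : (insRow [x] y).2 = none := by
      rw [insRow_cons_ge [] (by omega)]; rfl
    rw [newRow_cons_none this]
  | cons r rs ih =>
    have hr : r.Pairwise (· ≤ ·) := hs r (by simp)
    have hrs : ∀ t ∈ rs, t.Pairwise (· ≤ ·) := fun t ht => hs t (by simp [ht])
    rcases h : insRow r x with ⟨r1, o1⟩
    cases o1 with
    | none =>
      have hsnd : (insRow r x).2 = none := by rw [h]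
      have h2 : (insRow r1 y).2 = none := by
        have t := (insRow_bump hr hxy).1 hsnd
        rw [h] at t
        exact t
      rw [insertT_cons_none h, newRow_cons_none hsnd, newRow_cons_none h2]
    | some b =>
      have hsnd : (insRow r x).2 = some b := by rw [h]
      rw [insertT_cons_some h, newRow_cons_some hsnd]
      rcases h2 : (insRow r1 y).2 with _ | y'
      · rw [newRow_cons_none h2]; omega
      · rw [newRow_cons_some h2]
        have h2' : (insRow (insRow r x).1 y).2 = some y' := by rw [h]; exact h2
        have hby : b ≤ y' := (insRow_bump hr hxy).2 b y' hsnd h2'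
        have := ih hrs hby
        omega

lemma insertT_sorted {P : List (List ℕ)} (hs : ∀ r ∈ P, r.Pairwise (· ≤ ·)) (x : ℕ) :
    ∀ r ∈ insertT P x, r.Pairwise (· ≤ ·) := by
  induction P generalizing x with
  | nil =>
    intro r hr
    simp [insertT] at hr
    simp [hr, List.pairwise_singleton]
  | cons r rs ih =>
    have hr : r.Pairwise (· ≤ ·) := hs r (by simp)
    have hrs : ∀ t ∈ rs, t.Pairwise (· ≤ ·) := fun t ht => hs t (by simp [ht])
    rcases h : insRow r x with ⟨r1, o1⟩
    have hr1 : r1.Pairwise (· ≤ ·) := by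
      have := insRow_sorted hr x
      rwa [h] at this
    cases o1 with
    | none =>
      rw [insertT_cons_none h]
      intro t ht
      rcases List.mem_cons.mp ht with ht | ht
      · rwa [ht]
      · exact hrs t ht
    | some b =>
      rw [insertT_cons_some h]
      intro t ht
      rcases List.mem_cons.mp ht with ht | ht
      · rwa [ht]
      · exact ih hrs b t ht

lemma insRow_length_none {r : List ℕ} {x : ℕ} (h : (insRow r x).2 = none) :
    (insRow r x).1.length = r.length + 1 := by
  induction r generalizing x with
  | nil => simp [insRow]
  | cons a as ih =>
    by_cases hx : x < a
    · rw [insRow_cons_lt as hx] at h; simp at h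
    · rw [insRow_cons_ge as hx] at h ⊢
      simp [ih h]

lemma insRow_length_some {r : List ℕ} {x b : ℕ} (h : (insRow r x).2 = some b) :
    (insRow r x).1.length = r.length := by
  induction r generalizing x b with
  | nil => simp [insRow] at h
  | cons a as ih =>
    by_cases hx : x < a
    · rw [insRow_cons_lt as hx]; simp
    · rw [insRow_cons_ge as hx] at h ⊢
      simp [ih h]

lemma newRow_le_length (P : List (List ℕ)) (x : ℕ) : newRow P x ≤ P.length := by
  induction P generalizing x with
  | nil => simp [newRow_nil]
  | cons r rs ih =>
    rcases h : (insRow r x).2 with _ | b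
    · rw [newRow_cons_none h]; simp
    · rw [newRow_cons_some h]
      simpa using ih b

lemma insertT_length (P : List (List ℕ)) (x : ℕ) :
    (insertT P x).length = max P.length (newRow P x + 1) := by
  induction P generalizing x with
  | nil => simp [insertT, newRow_nil]
  | cons r rs ih =>
    rcases h : insRow r x with ⟨r1, o1⟩
    cases o1 with
    | none =>
      rw [insertT_cons_none h, newRow_cons_none (by rw [h])]
      simp
    | some b =>
      rw [insertT_cons_some h, newRow_cons_some (by rw [h])]
      simp only [List.length_cons, ih]
      omega

lemma insertT_lens (P : List (List ℕ)) (x : ℕ) (i : ℕ) :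
    ((insertT P x).getD i []).length
      = ((P.getD i []).length) + (if i = newRow P x then 1 else 0) := by
  induction P generalizing x i with
  | nil =>
    show (([[x]] : List (List ℕ)).getD i []).length = _
    cases i with
    | zero => simp [newRow_nil]
    | succ i => simp [newRow_nil]
  | cons r rs ih =>
    rcases h : insRow r x with ⟨r1, o1⟩
    cases o1 with
    | none =>
      rw [insertT_cons_none h, newRow_cons_none (by rw [h])]
      have hl : r1.length = r.length + 1 := by
        have := insRow_length_none (x := x) (r := r) (by rw [h])
        rwa [h] at this
      cases i with
      | zero => simp [hl]
      | succ i => simp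
    | some b =>
      rw [insertT_cons_some h, newRow_cons_some (by rw [h])]
      have hl : r1.length = r.length := by
        have := insRow_length_some (x := x) (r := r) (b := b) (by rw [h])
        rwa [h] at this
      cases i with
      | zero => simp [hl]
      | succ i =>
        simp only [List.getD_cons_succ, ih]
        congr 1
        simp

lemma getD_map_length (A : List (List ℕ)) (i : ℕ) :
    (A.map List.length).getD i 0 = (A.getD i []).length := by
  rcases Nat.lt_or_ge i A.length with h | h
  · rw [List.getD_eq_getElem _ _ (by simpa using h), List.getD_eq_getElem _ _ h]
    simp
  · rw [List.getD_eq_default _ _ (by simpa using h), List.getD_eq_default _ _ h]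
    rfl

end RSaux

namespace RSaux

lemma addRec_spec (k : ℕ) : ∀ (q : List (List ℕ)) (i0 : ℕ) (sh : List ℕ),
    i0 ≤ q.length →
    sh.length = max q.length (i0 + 1) →
    (∀ i, sh.getD i 0 = (q.getD i []).length + if i = i0 then 1 else 0) →
    (addRec q sh k).map List.length = sh ∧
    (∀ i, (q.getD i []).IsPrefix ((addRec q sh k).getD i [])) ∧
    k ∈ (addRec q sh k).getD i0 [] := by
  intro q
  induction q with
  | nil =>
    intro i0 sh h0 hlen hpt
    simp only [List.length_nil, Nat.le_zero] at h0
    subst h0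
    have h1 : sh.length = 1 := by simpa using hlen
    rcases sh with _ | ⟨s, ss⟩
    · simp at h1
    · have hss : ss = [] := by
        simpa using h1
      subst hss
      have hs : s = 1 := by simpa using hpt 0
      subst hs
      refine ⟨rfl, fun i => ?_, by simp [addRec]⟩
      simp [addRec]
  | cons r rs ih =>
    intro i0 sh h0 hlen hpt
    rcases sh with _ | ⟨s, ss⟩
    · exfalso
      simp at hlen
    cases i0 with
    | zero =>
      have hs : s = r.length + 1 := by simpa using hpt 0
      have hbranch : r.length < s := by omega
      have haddr : addRec (r :: rs) (s :: ss) k = (r ++ [k]) :: rs := by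
        simp [addRec, hbranch]
      rw [haddr]
      have hss : ss = rs.map List.length := by
        have hlenss : ss.length = rs.length := by
          simp at hlen
          omega
        apply List.ext_getElem (by simpa using hlenss)
        intro i hi1 hi2
        have := hpt (i + 1)
        simp only [List.getD_cons_succ] at this
        rw [List.getD_eq_getElem _ _ hi1] at this
        rw [List.getElem_map]
        rw [List.getD_eq_getElem _ _ (by simpa using hi2)] at this
        simpa using this
      refine ⟨by simp [hs, hss], fun i => ?_, by simp⟩
      cases i with
      | zero => simp
      | succ i => simp
    | succ j =>
      have hs : s = r.length := by simpa using hpt 0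
      have hbranch : ¬ r.length < s := by omega
      have haddr : addRec (r :: rs) (s :: ss) k = r :: addRec rs ss k := by
        simp [addRec, hbranch]
      rw [haddr]
      have hrec := ih j ss (by simpa using h0)
        (by
          simp only [List.length_cons] at hlen
          omega)
        (by
          intro i
          have := hpt (i + 1)
          simpa using this)
      refine ⟨by simp [hs, hrec.1], fun i => ?_, by simpa using hrec.2.2⟩
      cases i with
      | zero => simp
      | succ i => simpa using hrec.2.1 i

/-- One step of the RS fold preserves the invariants. -/
lemma step_spec {P Q : List (List ℕ)} (hshape : Q.map List.length = P.map List.length)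
    (x k : ℕ) :
    (addRec Q ((insertT P x).map List.length) k).map List.length
        = (insertT P x).map List.length ∧
    (∀ i, (Q.getD i []).IsPrefix
        ((addRec Q ((insertT P x).map List.length) k).getD i [])) ∧
    k ∈ (addRec Q ((insertT P x).map List.length) k).getD (newRow P x) [] := by
  have hQP : Q.length = P.length := by
    have := congrArg List.length hshape
    simpa using this
  apply addRec_spec k Q (newRow P x) ((insertT P x).map List.length)
  · rw [hQP]; exact newRow_le_length P x
  · rw [List.length_map, insertT_length, hQP]
  · intro i
    rw [getD_map_length, insertT_lens]
    have hlen : (Q.getD i []).length = (P.getD i []).length := by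
      rw [← getD_map_length, ← getD_map_length, hshape]
    rw [hlen]

end RSaux

namespace RSaux

/-- The RS fold, with labels starting at `c + 1`. -/
def RSfrom : List ℕ → ℕ → List (List ℕ) × List (List ℕ) → List (List ℕ) × List (List ℕ)
  | [], _, pq => pq
  | x :: xs, c, pq =>
      RSfrom xs (c + 1) (insertT pq.1 x, addRec pq.2 ((insertT pq.1 x).map List.length) (c + 1))

lemma foldl_eq_RSfrom : ∀ (xs : List ℕ) (c : ℕ) (pq : List (List ℕ) × List (List ℕ)),
    (((List.range xs.length).map (· + (c + 1))).zip xs).foldl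
      (fun pq kx =>
        let p' := insertT pq.1 kx.2
        (p', addRec pq.2 (p'.map List.length) kx.1)) pq = RSfrom xs c pq := by
  intro xs
  induction xs with
  | nil => intro c pq; simp [RSfrom]
  | cons x xs ih =>
    intro c pq
    rw [List.length_cons, List.range_succ_eq_map]
    have hmap : ((0 :: (List.range xs.length).map Nat.succ).map (· + (c + 1)))
        = (c + 1) :: ((List.range xs.length).map (· + (c + 1 + 1))) := by
      simp only [List.map_cons, List.map_map]
      refine congrArg₂ _ (by omega) ?_
      apply List.map_congr_left
      intro a _
      simp [Function.comp]
      omega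
    rw [hmap, List.zip_cons_cons, List.foldl_cons]
    exact ih (c + 1) _

lemma RS_eq_RSfrom (w : List ℕ) : RS w = RSfrom w 0 ([], []) := by
  rw [RS, ← foldl_eq_RSfrom w 0 ([], [])]

lemma foldl_insertT_sorted {P : List (List ℕ)} (hs : ∀ r ∈ P, r.Pairwise (· ≤ ·)) :
    ∀ (xs : List ℕ), ∀ r ∈ xs.foldl insertT P, r.Pairwise (· ≤ ·) := by
  intro xs
  induction xs generalizing P with
  | nil => simpa using hs
  | cons x xs ih =>
    rw [List.foldl_cons]
    exact ih (insertT_sorted hs x)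

/-- The master invariant of the RS fold. -/
lemma RSfrom_spec : ∀ (xs : List ℕ) (c : ℕ) (P Q : List (List ℕ)),
    (∀ r ∈ P, r.Pairwise (· ≤ ·)) → Q.map List.length = P.map List.length →
    (∀ r ∈ (RSfrom xs c (P, Q)).1, r.Pairwise (· ≤ ·)) ∧
    (RSfrom xs c (P, Q)).2.map List.length = (RSfrom xs c (P, Q)).1.map List.length ∧
    (∀ i, (Q.getD i []).IsPrefix ((RSfrom xs c (P, Q)).2.getD i [])) ∧
    (∀ m, m < xs.length →
      (c + m + 1) ∈ (RSfrom xs c (P, Q)).2.getD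
        (newRow ((xs.take m).foldl insertT P) (xs.getD m 0)) []) := by
  intro xs
  induction xs with
  | nil =>
    intro c P Q hP hQ
    refine ⟨hP, hQ, fun i => List.prefix_refl _, fun m hm => by simp at hm⟩
  | cons x xs ih =>
    intro c P Q hP hQ
    have hstep := step_spec hQ x (c + 1)
    set P1 := insertT P x with hP1
    set Q1 := addRec Q ((insertT P x).map List.length) (c + 1) with hQ1
    have hrec := ih (c + 1) P1 Q1 (insertT_sorted hP x) hstep.1
    have hfold : RSfrom (x :: xs) c (P, Q) = RSfrom xs (c + 1) (P1, Q1) := rfl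
    rw [hfold]
    refine ⟨hrec.1, hrec.2.1, ?_, ?_⟩
    · intro i
      exact (hstep.2.1 i).trans (hrec.2.2.1 i)
    · intro m hm
      cases m with
      | zero =>
        simp only [List.take_zero, List.foldl_nil, List.getD_cons_zero]
        have hmem := hstep.2.2
        exact List.IsPrefix.mem hmem (hrec.2.2.1 (newRow P x))
      | succ m =>
        have := hrec.2.2.2 m (by simpa using hm)
        have harr : c + 1 + m + 1 = c + (m + 1) + 1 := by omega
        rw [harr] at this
        simpa using this

end RSaux

namespace RSaux

lemma colStart_succ (l : List ℕ) (j : ℕ) :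
    colStart l (j + 1) = colStart l j + conjC l j := by
  simp [colStart, List.range_succ]

lemma colStart_mono (l : List ℕ) {j j' : ℕ} (h : j ≤ j') : colStart l j ≤ colStart l j' := by
  induction j' with
  | zero => simp at h; simp [h]
  | succ j' ih =>
    rcases Nat.lt_or_ge j (j' + 1) with h2 | h2
    · have := ih (by omega)
      rw [colStart_succ]
      omega
    · have : j = j' + 1 := by omega
      rw [this]

lemma conjC_cons (a : ℕ) (l : List ℕ) (j : ℕ) :
    conjC (a :: l) j = (if j < a then 1 else 0) + conjC l j := by
  simp only [conjC, List.filter_cons]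
  by_cases h : j < a <;> simp [h] <;> omega

lemma lt_conjC {l : List ℕ} (hs : List.Pairwise (· ≥ ·) l) :
    ∀ i j, i < l.length → j < l.getD i 0 → i < conjC l j := by
  induction l with
  | nil => intro i j h; simp at h
  | cons a l ih =>
    rw [List.pairwise_cons] at hs
    intro i j hi hj
    cases i with
    | zero =>
      simp only [List.getD_cons_zero] at hj
      rw [conjC_cons]
      simp [hj]
    | succ i =>
      simp only [List.getD_cons_succ] at hj
      have hi' : i < l.length := by simpa using hi
      have h1 : i < conjC l j := ih hs.2 i j hi' hj
      have hmem : l.getD i 0 ∈ l := by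
        rw [List.getD_eq_getElem _ _ hi']
        exact List.getElem_mem hi'
      have hja : j < a := lt_of_lt_of_le hj (hs.1 _ hmem)
      rw [conjC_cons]
      simp [hja]
      omega

lemma tab_getD {l : List ℕ} {i : ℕ} (hi : i < l.length) :
    (tabColList l).getD i [] = (List.range (l.getD i 0)).map fun j => colStart l j + i + 1 := by
  rw [tabColList, List.getD_eq_getElem _ _ (by simpa using hi)]
  simp

/-- Uniqueness of the row of entry `m + 1` in the column superstandard tableau. -/
lemma row_unique {l : List ℕ} (hsort : l.Chain' (· ≥ ·)) {m i j : ℕ}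
    (h1 : colStart l j ≤ m) (h2 : m < colStart l (j + 1))
    (hmem : (m + 1) ∈ (tabColList l).getD i []) : i = m - colStart l j := by
  have hpw : List.Pairwise (· ≥ ·) l := List.isChain_iff_pairwise.mp hsort
  rcases Nat.lt_or_ge i (tabColList l).length with hi | hi
  swap
  · rw [List.getD_eq_default _ _ hi] at hmem
    simp at hmem
  have hil : i < l.length := by simpa [tabColList] using hi
  rw [tab_getD hil] at hmem
  simp only [List.mem_map, List.mem_range] at hmem
  obtain ⟨j', hj', hval⟩ := hmem
  have hm : m = colStart l j' + i := by omega
  have hconj : i < conjC l j' := lt_conjC hpw i j' hil hj'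
  have hup : m < colStart l (j' + 1) := by
    rw [colStart_succ]; omega
  have hlo : colStart l j' ≤ m := by omega
  have hjj : j = j' := by
    by_contra hne
    rcases Nat.lt_or_ge j j' with hlt | hgt
    · have : colStart l (j + 1) ≤ colStart l j' := colStart_mono l (by omega)
      omega
    · have hlt : j' < j := by omega
      have : colStart l (j' + 1) ≤ colStart l j := colStart_mono l (by omega)
      omega
  subst hjj
  omega

end RSaux

namespace RSaux

lemma wordOf_length {n : ℕ} (w : Equiv.Perm (Fin n)) : (wordOf w).length = n := by
  simp [wordOf]

lemma wordOf_getD {n : ℕ} (w : Equiv.Perm (Fin n)) {p : ℕ} (hp : p < n) :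
    (wordOf w).getD p 0 = (w ⟨p, hp⟩ : ℕ) + 1 := by
  rw [List.getD_eq_getElem _ _ (by simpa [wordOf] using hp)]
  simp [wordOf]

lemma take_succ_foldl {n : ℕ} (w : Equiv.Perm (Fin n)) {p : ℕ} (hp : p < n)
    (P : List (List ℕ)) :
    ((wordOf w).take (p + 1)).foldl insertT P
      = insertT (((wordOf w).take p).foldl insertT P) ((wordOf w).getD p 0) := by
  have hlt : p < (wordOf w).length := by rwa [wordOf_length]
  rw [List.take_succ, List.getElem?_eq_getElem hlt]
  rw [List.getD_eq_getElem _ _ hlt]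
  simp only [Option.toList_some, List.foldl_append, List.foldl_cons, List.foldl_nil]

/-- The key consecutive-position inequality. -/
lemma consec {n : ℕ} {l : List ℕ} (hsort : l.Chain' (· ≥ ·))
    {w : Equiv.Perm (Fin n)} (hQ : (RS (wordOf w)).2 = tabColList l)
    {p j : ℕ} (hp : colStart l j ≤ p) (hp2 : p + 1 < colStart l (j + 1)) (hpn : p + 1 < n) :
    (wordOf w).getD (p + 1) 0 < (wordOf w).getD p 0 := by
  have hspec := RSfrom_spec (wordOf w) 0 [] []
    (by intro r hr; simp at hr) rfl
  have hQ' : (RSfrom (wordOf w) 0 ([], [])).2 = tabColList l := by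
    rw [← RS_eq_RSfrom]; exact hQ
  rw [hQ'] at hspec
  have hlen : (wordOf w).length = n := wordOf_length w
  have hmem1 := hspec.2.2.2 p (by omega)
  have hmem2 := hspec.2.2.2 (p + 1) (by omega)
  simp only [Nat.zero_add] at hmem1 hmem2
  set Pp := ((wordOf w).take p).foldl insertT ([] : List (List ℕ)) with hPp
  have hrow1 : newRow Pp ((wordOf w).getD p 0) = p - colStart l j :=
    row_unique hsort hp (by omega) hmem1
  have hfold : ((wordOf w).take (p + 1)).foldl insertT ([] : List (List ℕ))
      = insertT Pp ((wordOf w).getD p 0) := take_succ_foldl w (by omega) []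
  rw [hfold] at hmem2
  have hrow2 : newRow (insertT Pp ((wordOf w).getD p 0)) ((wordOf w).getD (p + 1) 0)
      = p + 1 - colStart l j :=
    row_unique hsort (by omega) hp2 hmem2
  by_contra hcon
  push_neg at hcon
  have hsortedP : ∀ r ∈ Pp, r.Pairwise (· ≤ ·) :=
    foldl_insertT_sorted (by intro r hr; simp at hr) _
  have := newRow_le_newRow hsortedP hcon
  rw [hrow1, hrow2] at this
  omega

end RSaux


/-- If the Robinson–Schensted recording tableau of `w ∈ S_n` is the column
superstandard tableau `tab_λ`, then `w` is strictly decreasing on each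
consecutive block of positions of sizes `λ'_1, λ'_2, …`. -/
theorem decreasing_blocks_of_recording_eq_tabCol (n : ℕ) (l : List ℕ)
    (hsort : l.Chain' (· ≥ ·)) (hpos : ∀ x ∈ l, 0 < x) (hsum : l.sum = n)
    (w : Equiv.Perm (Fin n))
    (hQ : (RS (wordOf w)).2 = tabColList l) :
    ∀ (j : ℕ) (a b : Fin n), colStart l j ≤ (a : ℕ) → (a : ℕ) < (b : ℕ) →
      (b : ℕ) < colStart l (j + 1) → w b < w a := by
  intro j a b hca hab hbc
  have key : ∀ q (hq : q < n) (p) (hp : p < n), colStart l j ≤ p → p < q →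
      q < colStart l (j + 1) → w ⟨q, hq⟩ < w ⟨p, hp⟩ := by
    intro q
    induction q with
    | zero => omega
    | succ q ih =>
      intro hq p hp hcp hpq hqc
      have hcons : w ⟨q + 1, hq⟩ < w ⟨q, by omega⟩ := by
        have hcq : colStart l j ≤ q := by omega
        have hlt := RSaux.consec hsort hQ hcq hqc hq
        rw [RSaux.wordOf_getD w hq, RSaux.wordOf_getD w (show q < n by omega)] at hlt
        exact Fin.lt_def.mpr (by omega)
      rcases Nat.lt_or_ge p q with hlt | hge
      · exact lt_trans hcons (ih (by omega) p hp hcp hlt (by omega))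
      · have : p = q := by omega
        subst this
        exact hcons
  have := key b b.isLt a a.isLt hca hab hbc
  simpa using this
end

section
/- Let (W,S) be a Coxeter system with Hecke algebra H over A = ℤ[q,q⁻¹], basis {T_w}, with T_s² = 1 + (q−q⁻¹)T_s. Let J ⊆ S and let φ: H_J → A be the A-algebra homomorphism with φ(T_s) = −q⁻¹ for s ∈ J. Then the induced module H ⊗_{H_J} A_φ is A-free with basis (T_w ⊗ 1 | w ∈ D_J), and for s ∈ S and w ∈ D_J: T_s(T_w ⊗ 1) = T_{sw} ⊗ 1 if sw > w and sw ∈ D_J; T_s(T_w ⊗ 1) = −q⁻¹(T_w ⊗ 1) if sw > w and sw ∉ D_J; T_s(T_w ⊗ 1) = T_{sw} ⊗ 1 + (q−q⁻¹)(T_w ⊗ 1) if sw < w. -/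
noncomputable section

abbrev A : Type := LaurentPolynomial ℤ

noncomputable def qA : A := LaurentPolynomial.T 1
noncomputable def qAinv : A := LaurentPolynomial.T (-1)

namespace HeckeAux

open CoxeterSystem List

variable {B W : Type*} [Group W] {M : CoxeterMatrix B} {cs : CoxeterSystem M W}
variable {H : Type*} [Ring H] [Algebra A H] {TT : Module.Basis W A H}

variable (hT1 : TT 1 = 1)
variable (hup : ∀ (i : B) (w : W), cs.length w < cs.length (cs.simple i * w) →
      TT (cs.simple i) * TT w = TT (cs.simple i * w))
variable (hdown : ∀ (i : B) (w : W), cs.length (cs.simple i * w) < cs.length w →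
      TT (cs.simple i) * TT w = TT (cs.simple i * w) + (qA - qAinv) • TT w)

include hT1 hup

lemma prodTT : ∀ (ω : List B), cs.IsReduced ω →
    (ω.map fun i => TT (cs.simple i)).prod = TT (cs.wordProd ω) := by
  intro ω
  induction ω with
  | nil => intro _; simpa using hT1.symm
  | cons i ω' ih =>
      intro hred
      have hred' : cs.IsReduced ω' := by
        have := CoxeterSystem.IsReduced.drop (ω := i :: ω') hred (j := 1)
        simpa using this
      have hlen : cs.length (cs.wordProd ω') < cs.length (cs.simple i * cs.wordProd ω') := by
        rw [← cs.wordProd_cons i ω']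
        rw [CoxeterSystem.IsReduced] at hred hred'
        rw [hred, hred']
        simp
      simp only [List.map_cons, List.prod_cons, ih hred', hup i _ hlen, cs.wordProd_cons]

lemma Rup (w : W) (j : B) (h : cs.length w < cs.length (w * cs.simple j)) :
    TT w * TT (cs.simple j) = TT (w * cs.simple j) := by
  obtain ⟨ω, hred, hw⟩ := cs.exists_reduced_word' w
  have hl : cs.length (w * cs.simple j) = cs.length w + 1 := by
    rcases cs.length_mul_simple w j with h' | h' <;> omega
  have hred2 : cs.IsReduced (ω ++ [j]) := by
    rw [CoxeterSystem.IsReduced, cs.wordProd_append, ← hw, cs.wordProd_singleton, hl]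
    rw [CoxeterSystem.IsReduced] at hred
    rw [← hw] at hred
    simp [hred]
  have e1 := prodTT hT1 hup ω hred
  have e2 := prodTT hT1 hup (ω ++ [j]) hred2
  rw [List.map_append, List.prod_append, cs.wordProd_append] at e2
  simp only [List.map_cons, List.map_nil, List.prod_cons, List.prod_nil, mul_one,
    cs.wordProd_singleton] at e2
  rw [← hw] at e1 e2
  rw [← e1, e2]

include hdown

lemma TTs_sq (j : B) : TT (cs.simple j) * TT (cs.simple j)
    = 1 + (qA - qAinv) • TT (cs.simple j) := by
  have h := hdown j (cs.simple j) (by simp [cs.simple_mul_simple_self j])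
  rw [cs.simple_mul_simple_self j] at h
  rw [h, hT1]

lemma Rdown (w : W) (j : B) (h : cs.length (w * cs.simple j) < cs.length w) :
    TT w * TT (cs.simple j) = TT (w * cs.simple j) + (qA - qAinv) • TT w := by
  set v := w * cs.simple j with hv
  have hw : w = v * cs.simple j := by rw [hv, mul_assoc, cs.simple_mul_simple_self, mul_one]
  have h2 : cs.length v < cs.length (v * cs.simple j) := by rw [← hw]; exact h
  have e1 := Rup hT1 hup v j h2
  rw [← hw] at e1
  calc TT w * TT (cs.simple j) = TT v * (TT (cs.simple j) * TT (cs.simple j)) := by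
        rw [← mul_assoc, e1]
    _ = TT v + (qA - qAinv) • (TT v * TT (cs.simple j)) := by
        rw [TTs_sq hT1 hup hdown, mul_add, mul_one, mul_smul_comm]
    _ = TT (w * cs.simple j) + (qA - qAinv) • TT w := by rw [e1, hv]

lemma lemZ (i : B) (w : W) (j : B)
    (h1 : cs.length (cs.simple i * w) = cs.length w + 1)
    (h2 : cs.length (w * cs.simple j) = cs.length w + 1)
    (h3 : cs.length (cs.simple i * w * cs.simple j) = cs.length w) :
    cs.simple i * w = w * cs.simple j := by
  have e1 : TT (cs.simple i) * TT w * TT (cs.simple j)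
      = TT (cs.simple i * w * cs.simple j) + (qA - qAinv) • TT (cs.simple i * w) := by
    rw [hup i w (by omega), Rdown hT1 hup hdown (cs.simple i * w) j (by omega)]
  have e2 : TT (cs.simple i) * TT w * TT (cs.simple j)
      = TT (cs.simple i * w * cs.simple j) + (qA - qAinv) • TT (w * cs.simple j) := by
    rw [mul_assoc, Rup hT1 hup w j (by omega), hdown i (w * cs.simple j)
      (by rw [← mul_assoc]; omega)]
    rw [← mul_assoc]
  have e3 : (qA - qAinv) • TT (cs.simple i * w) = (qA - qAinv) • TT (w * cs.simple j) := by
    exact add_left_cancel (e1.symm.trans e2)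
  by_contra hne
  classical
  have hz : qA - qAinv ≠ 0 := by
    intro h
    have h2 : (Finsupp.single (1:ℤ) (1:ℤ)) = Finsupp.single (-1:ℤ) (1:ℤ) := by
      have : qA = qAinv := by linear_combination h
      exact congrArg AddMonoidAlgebra.coeff this
    rcases (Finsupp.single_eq_single_iff _ _ _ _).mp h2 with ⟨h3, _⟩ | ⟨h3, _⟩ <;> omega
  have := congrArg TT.repr e3
  rw [map_smul, map_smul, TT.repr_self, TT.repr_self] at this
  have h4 := DFunLike.congr_fun this (cs.simple i * w)
  rw [Finsupp.smul_apply, Finsupp.smul_apply, Finsupp.single_apply, Finsupp.single_apply] at h4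
  simp only [if_pos rfl, if_neg (Ne.symm hne), smul_eq_mul, mul_one, mul_zero] at h4
  simp [hz] at h4


lemma exchangeR : ∀ (ω : List B) (j : B), cs.IsReduced ω →
    cs.length (cs.wordProd ω * cs.simple j) < cs.length (cs.wordProd ω) →
    ∃ k < ω.length, cs.wordProd ω * cs.simple j = cs.wordProd (ω.eraseIdx k) := by
  intro ω
  induction ω with
  | nil =>
      intro j hred hlen
      rw [cs.wordProd_nil] at hlen
      simp at hlen
  | cons i ω₁ ih =>
      intro j hred hlen
      have hred₁ : cs.IsReduced ω₁ := by
        have := CoxeterSystem.IsReduced.drop (ω := i :: ω₁) hred (j := 1)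
        simpa using this
      have hw : cs.wordProd (i :: ω₁) = cs.simple i * cs.wordProd ω₁ := cs.wordProd_cons i ω₁
      have hlw1 : cs.length (cs.wordProd ω₁) = ω₁.length := hred₁
      have hl1 : cs.length (cs.simple i * cs.wordProd ω₁) = cs.length (cs.wordProd ω₁) + 1 := by
        have h : cs.length (cs.wordProd (i :: ω₁)) = (i :: ω₁).length := hred
        rw [hw] at h
        rw [h, hlw1]
        simp
      by_cases hc : cs.length (cs.wordProd ω₁ * cs.simple j) < cs.length (cs.wordProd ω₁)
      · obtain ⟨k, hk, he⟩ := ih j hred₁ hc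
        refine ⟨k + 1, by simpa using Nat.succ_lt_succ hk, ?_⟩
        rw [List.eraseIdx_cons_succ, cs.wordProd_cons, mul_assoc, he, ← cs.wordProd_cons]
      · have h2 : cs.length (cs.wordProd ω₁ * cs.simple j) = cs.length (cs.wordProd ω₁) + 1 := by
          rcases cs.length_mul_simple (cs.wordProd ω₁) j with h' | h' <;> omega
        have h3 : cs.length (cs.simple i * cs.wordProd ω₁ * cs.simple j)
            = cs.length (cs.wordProd ω₁) := by
          rw [hw] at hlen
          rcases cs.length_simple_mul (cs.wordProd ω₁ * cs.simple j) i with h' | h' <;>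
            rw [← mul_assoc] at h' <;> omega
        rw [hlw1] at hl1
        rw [← hlw1] at hl1
        have hZ := lemZ hT1 hup hdown i (cs.wordProd ω₁) j hl1 h2 h3
        refine ⟨0, by simp, ?_⟩
        rw [List.eraseIdx_cons_zero, hw, mul_assoc, ← hZ, ← mul_assoc,
          cs.simple_mul_simple_self, one_mul]

lemma exists_reduced_Jword (J : Set B) : ∀ (n : ℕ) (ω : List B), ω.length = n →
    (∀ i ∈ ω, i ∈ J) →
    ∃ ω' : List B, (∀ i ∈ ω', i ∈ J) ∧ cs.wordProd ω' = cs.wordProd ω ∧ cs.IsReduced ω' := by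
  intro n
  induction n using Nat.strong_induction_on with
  | _ n ih =>
    intro ω hn hJ
    by_cases hr : cs.IsReduced ω
    · exact ⟨ω, hJ, rfl, hr⟩
    · have hP : ∃ m, ¬ cs.IsReduced (ω.take m) := ⟨ω.length, by rwa [List.take_length]⟩
      classical
      set m₀ := Nat.find hP with hm₀
      have hm₀spec : ¬ cs.IsReduced (ω.take m₀) := Nat.find_spec hP
      have hm₀pos : 0 < m₀ := by
        rcases Nat.eq_zero_or_pos m₀ with h | h
        · exfalso; apply hm₀spec; rw [h]; simp [CoxeterSystem.IsReduced]
        · exact h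
      set k := m₀ - 1 with hk
      have hkred : cs.IsReduced (ω.take k) := by
        by_contra hcon
        exact Nat.find_min hP (by omega) hcon
      have hklt : k < ω.length := by
        have hle : m₀ ≤ ω.length := Nat.find_min' hP (by rwa [List.take_length])
        omega
      have htake : ω.take (k + 1) = ω.take k ++ [ω.get ⟨k, hklt⟩] := by
        rw [← List.take_concat_get (l := ω) (i := k) hklt]
        simp
      have hm₀eq : m₀ = k + 1 := by omega
      have hnotred : ¬ cs.IsReduced (ω.take (k+1)) := by rwa [hm₀eq] at hm₀spec
      set x := cs.wordProd (ω.take k) with hx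
      set jj := ω.get ⟨k, hklt⟩ with hjj
      have hlenx : cs.length x = k := by
        have := hkred
        rwa [CoxeterSystem.IsReduced, List.length_take, min_eq_left (by omega)] at this
      have hdownlen : cs.length (x * cs.simple jj) < cs.length x := by
        have hne : cs.length (x * cs.simple jj) ≠ k + 1 := by
          intro hcon
          apply hnotred
          rw [CoxeterSystem.IsReduced, htake, cs.wordProd_append, cs.wordProd_singleton]
          simp only [List.length_append, List.length_take, List.length_singleton]
          rw [← hx, hcon]
          rw [min_eq_left (by omega)]
        rcases cs.length_mul_simple x jj with h' | h' <;> omega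
      obtain ⟨r, hr', he⟩ := exchangeR hT1 hup hdown (ω.take k) jj hkred hdownlen
      set ω₂ := (ω.take k).eraseIdx r ++ ω.drop (k+1) with hω₂
      have hlω₂ : ω₂.length = ω.length - 2 := by
        rw [hω₂, List.length_append, List.length_eraseIdx_of_lt hr']
        simp only [List.length_take, List.length_drop]
        omega
      have hJω₂ : ∀ i ∈ ω₂, i ∈ J := by
        intro i hi
        rw [hω₂, List.mem_append] at hi
        rcases hi with hi | hi
        · exact hJ i (List.mem_of_mem_take (List.mem_of_mem_eraseIdx hi))
        · exact hJ i (List.mem_of_mem_drop hi)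
      have hprod : cs.wordProd ω₂ = cs.wordProd ω := by
        conv_rhs => rw [← List.take_append_drop (k+1) ω]
        rw [hω₂, cs.wordProd_append, cs.wordProd_append, htake, cs.wordProd_append,
          cs.wordProd_singleton, ← hx, ← he]
      obtain ⟨ω', h1, h2, h3⟩ := ih ω₂.length (by omega) ω₂ rfl hJω₂
      exact ⟨ω', h1, by rw [h2, hprod], h3⟩


variable (cs) in
def WJ (J : Set B) : Subgroup W := Subgroup.closure (cs.simple '' J)

omit hT1 hup hdown

lemma simple_mem_WJ {J : Set B} {j : B} (hj : j ∈ J) : cs.simple j ∈ WJ cs J :=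
  Subgroup.subset_closure ⟨j, hj, rfl⟩

lemma wordProd_mem_WJ {J : Set B} {ω : List B} (h : ∀ i ∈ ω, i ∈ J) :
    cs.wordProd ω ∈ WJ cs J := by
  induction ω with
  | nil => rw [cs.wordProd_nil]; exact one_mem _
  | cons i ω ih =>
      rw [cs.wordProd_cons]
      exact mul_mem (simple_mem_WJ (h i (by simp)))
        (ih fun i' hi' => h i' (List.mem_cons_of_mem _ hi'))

lemma exists_Jword {J : Set B} {u : W} (hu : u ∈ WJ cs J) :
    ∃ ω : List B, (∀ i ∈ ω, i ∈ J) ∧ cs.wordProd ω = u := by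
  induction hu using Subgroup.closure_induction with
  | mem x hx =>
      obtain ⟨j, hj, rfl⟩ := hx
      exact ⟨[j], by simpa using hj, cs.wordProd_singleton j⟩
  | one => exact ⟨[], by simp, cs.wordProd_nil⟩
  | mul x y _ _ hx hy =>
      obtain ⟨ω₁, h1, e1⟩ := hx; obtain ⟨ω₂, h2, e2⟩ := hy
      refine ⟨ω₁ ++ ω₂, ?_, by rw [cs.wordProd_append, e1, e2]⟩
      intro i hi
      rcases List.mem_append.mp hi with h | h
      exacts [h1 i h, h2 i h]
  | inv x _ hx =>
      obtain ⟨ω, h1, e1⟩ := hx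
      exact ⟨ω.reverse, fun i hi => h1 i (List.mem_reverse.mp hi),
        by rw [cs.wordProd_reverse, e1]⟩

variable (cs) in
lemma exists_min_rep (J : Set B) (c : W ⧸ WJ cs J) :
    ∃ d : W, (QuotientGroup.mk d : W ⧸ WJ cs J) = c ∧
      ∀ x : W, (QuotientGroup.mk x : W ⧸ WJ cs J) = c → cs.length d ≤ cs.length x := by
  classical
  obtain ⟨x₀, rfl⟩ := QuotientGroup.mk_surjective c
  have hP : ∃ n, ∃ d : W, (QuotientGroup.mk d : W ⧸ WJ cs J) = QuotientGroup.mk x₀ ∧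
      cs.length d = n := ⟨cs.length x₀, x₀, rfl, rfl⟩
  obtain ⟨d, hd, hdl⟩ := Nat.find_spec hP
  refine ⟨d, hd, fun x hx => ?_⟩
  rw [hdl]
  exact Nat.find_min' hP ⟨x, hx, rfl⟩

variable (cs) in
noncomputable def dmin (J : Set B) (c : W ⧸ WJ cs J) : W :=
  Classical.choose (exists_min_rep cs J c)

lemma dmin_mk (J : Set B) (c : W ⧸ WJ cs J) :
    (QuotientGroup.mk (dmin cs J c) : W ⧸ WJ cs J) = c :=
  (Classical.choose_spec (exists_min_rep cs J c)).1

lemma dmin_min (J : Set B) (c : W ⧸ WJ cs J) {x : W}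
    (hx : (QuotientGroup.mk x : W ⧸ WJ cs J) = c) :
    cs.length (dmin cs J c) ≤ cs.length x :=
  (Classical.choose_spec (exists_min_rep cs J c)).2 x hx

include hT1 hup hdown

lemma dmin_mul_length (J : Set B) (c : W ⧸ WJ cs J) :
    ∀ (n : ℕ) (u : W), u ∈ WJ cs J → cs.length u = n →
    cs.length (dmin cs J c * u) = cs.length (dmin cs J c) + cs.length u := by
  set d := dmin cs J c with hd
  intro n
  induction n using Nat.strong_induction_on with
  | _ n ih =>
    intro u hu hn
    rcases Nat.eq_zero_or_pos n with h0 | hpos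
    · have : u = 1 := cs.length_eq_zero_iff.mp (by omega)
      simp [this]
    obtain ⟨ω, hωJ, hωu⟩ := exists_Jword hu
    obtain ⟨υ, hυJ, hυprod, hυred⟩ := exists_reduced_Jword hT1 hup hdown J ω.length ω rfl hωJ
    rw [hωu] at hυprod
    have hlυ : υ.length = n := by rw [← hn, ← hυprod]; exact hυred.symm
    have hne : υ ≠ [] := by intro h; rw [h] at hlυ; simp at hlυ; omega
    rcases List.eq_nil_or_concat' υ with h | ⟨υ', j, rfl⟩
    · exact absurd h hne
    have hjJ : j ∈ J := hυJ j (by simp)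
    have hred' : cs.IsReduced υ' := by
      have := CoxeterSystem.IsReduced.take hυred (j := υ'.length)
      simpa using this
    set u₁ := cs.wordProd υ' with hu₁def
    have hu₁ : u₁ ∈ WJ cs J := wordProd_mem_WJ fun i hi => hυJ i (by simp [hi])
    have hℓu₁ : cs.length u₁ = n - 1 := by
      rw [hu₁def, hred']
      simp at hlυ ⊢
      omega
    have hueq : u = u₁ * cs.simple j := by
      rw [← hυprod, cs.wordProd_append, cs.wordProd_singleton, hu₁def]
    have IH1 : cs.length (d * u₁) = cs.length d + cs.length u₁ :=
      ih (n-1) (by omega) u₁ hu₁ hℓu₁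
    -- goal: ℓ (d * u) = ℓ d + n
    by_contra hcon
    have hℓu : cs.length u = n := hn
    have hdu : d * u = (d * u₁) * cs.simple j := by rw [hueq, mul_assoc]
    have hcases := cs.length_mul_simple (d * u₁) j
    have hlt : cs.length ((d * u₁) * cs.simple j) < cs.length (d * u₁) := by
      rcases hcases with h' | h'
      · exfalso; apply hcon; rw [hdu, h', IH1, hℓu₁, hℓu]; omega
      · omega
    obtain ⟨δ, hδred, hδw⟩ := cs.exists_reduced_word' d
    have hδυ'red : cs.IsReduced (δ ++ υ') := by
      have h1 : cs.length d = δ.length := by rw [hδw]; exact hδred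
      have h2 : cs.length u₁ = υ'.length := hred'
      rw [CoxeterSystem.IsReduced, cs.wordProd_append, ← hδw, ← hu₁def, IH1,
        List.length_append, h1, h2]
    have hprodeq : cs.wordProd (δ ++ υ') = d * u₁ := by
      rw [cs.wordProd_append, ← hδw, ← hu₁def]
    obtain ⟨k, hk, he⟩ := exchangeR hT1 hup hdown (δ ++ υ') j hδυ'red (by rw [hprodeq]; exact hlt)
    rw [hprodeq] at he
    by_cases hkδ : k < δ.length
    · -- erase in δ part: contradiction with minimality
      rw [List.eraseIdx_append_of_lt_length hkδ, cs.wordProd_append] at he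
      set dh := cs.wordProd (δ.eraseIdx k) with hdh
      have hmk : (QuotientGroup.mk dh : W ⧸ WJ cs J) = c := by
        have hd2 : d * u₁ * cs.simple j = dh * u₁ := by rw [he, hu₁def]
        have hdh_eq : dh = d * u₁ * cs.simple j * u₁⁻¹ := by
          rw [hd2, mul_inv_cancel_right]
        have hrel : d⁻¹ * dh ∈ WJ cs J := by
          have heq : d⁻¹ * dh = u₁ * cs.simple j * u₁⁻¹ := by rw [hdh_eq]; group
          rw [heq]
          exact mul_mem (mul_mem hu₁ (simple_mem_WJ hjJ)) (inv_mem hu₁)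
        have := (QuotientGroup.eq (s := WJ cs J) (a := d) (b := dh)).mpr hrel
        rw [← this, hd, dmin_mk]
      have hlen_dh : cs.length dh ≤ δ.length - 1 := by
        calc cs.length dh ≤ (δ.eraseIdx k).length := cs.length_wordProd_le _
          _ = δ.length - 1 := List.length_eraseIdx_of_lt hkδ
      have hmin := dmin_min J c hmk
      rw [← hd] at hmin
      have hδd : δ.length = cs.length d := by rw [hδw]; exact hδred.symm
      omega
    · -- erase in υ' part: u gets shorter, contradiction
      push_neg at hkδ
      rw [List.eraseIdx_append_of_length_le hkδ, cs.wordProd_append, ← hδw] at he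
      have husj : u₁ * cs.simple j = cs.wordProd (υ'.eraseIdx (k - δ.length)) := by
        have := he
        rw [mul_assoc] at this
        exact mul_left_cancel this
      have : cs.length u ≤ n - 2 := by
        rw [hueq, husj]
        calc cs.length (cs.wordProd (υ'.eraseIdx (k - δ.length)))
            ≤ (υ'.eraseIdx (k - δ.length)).length := cs.length_wordProd_le _
          _ ≤ υ'.length - 1 := by
              have h' : k - δ.length < υ'.length := by
                rw [List.length_append] at hk; omega
              rw [List.length_eraseIdx_of_lt h']
          _ ≤ n - 2 := by simp at hlυ; omega
      omega


lemma dmin_mem_DJ (J : Set B) (c : W ⧸ WJ cs J) : dmin cs J c ∈ cs.DJ J := by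
  intro j hj
  have := dmin_mul_length hT1 hup hdown J c 1 (cs.simple j) (simple_mem_WJ hj)
    (cs.length_simple j)
  rw [cs.length_simple] at this
  omega

lemma length_eq_dmin_add (J : Set B) (w : W) :
    cs.length w = cs.length (dmin cs J (QuotientGroup.mk w))
      + cs.length ((dmin cs J (QuotientGroup.mk w))⁻¹ * w) := by
  set d := dmin cs J (QuotientGroup.mk w) with hd
  have hu : d⁻¹ * w ∈ WJ cs J := QuotientGroup.eq.mp (dmin_mk J _)
  have := dmin_mul_length hT1 hup hdown J (QuotientGroup.mk w)
    (cs.length (d⁻¹ * w)) (d⁻¹ * w) hu rfl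
  rw [← hd, mul_inv_cancel_left] at this
  exact this

lemma eq_dmin_of_mem_DJ (J : Set B) {d : W} (hd : d ∈ cs.DJ J) :
    dmin cs J (QuotientGroup.mk d) = d := by
  set m := dmin cs J (QuotientGroup.mk d) with hm
  have hu : m⁻¹ * d ∈ WJ cs J := QuotientGroup.eq.mp (dmin_mk J _)
  set u := m⁻¹ * d with hudef
  have hdec : d = m * u := by rw [hudef, mul_inv_cancel_left]
  have hadd : cs.length d = cs.length m + cs.length u :=
    length_eq_dmin_add hT1 hup hdown J d
  by_cases h0 : cs.length u = 0
  · have : u = 1 := cs.length_eq_zero_iff.mp h0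
    rw [this, mul_one] at hdec
    exact hdec.symm
  · exfalso
    obtain ⟨ω, hωJ, hωu⟩ := exists_Jword hu
    obtain ⟨υ, hυJ, hυprod, hυred⟩ := exists_reduced_Jword hT1 hup hdown J ω.length ω rfl hωJ
    rw [hωu] at hυprod
    have hlυ : υ.length = cs.length u := by rw [← hυprod]; exact hυred.symm
    have hne : υ ≠ [] := by intro h; rw [h] at hlυ; simp at hlυ; omega
    rcases List.eq_nil_or_concat' υ with h | ⟨υ', jj, rfl⟩
    · exact absurd h hne
    have hjJ : jj ∈ J := hυJ jj (by simp)
    have husj : u * cs.simple jj = cs.wordProd υ' := by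
      rw [← hυprod, cs.wordProd_append, cs.wordProd_singleton, mul_assoc,
        cs.simple_mul_simple_self, mul_one]
    have hℓusj : cs.length (u * cs.simple jj) ≤ cs.length u - 1 := by
      rw [husj]
      calc cs.length (cs.wordProd υ') ≤ υ'.length := cs.length_wordProd_le _
        _ ≤ cs.length u - 1 := by rw [← hlυ]; simp
    have hmem : u * cs.simple jj ∈ WJ cs J := mul_mem hu (simple_mem_WJ hjJ)
    have hds : d * cs.simple jj = m * (u * cs.simple jj) := by
      rw [hdec, mul_assoc]
    have hlen : cs.length (d * cs.simple jj) = cs.length m + cs.length (u * cs.simple jj) := by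
      rw [hds]
      exact dmin_mul_length hT1 hup hdown J _ _ _ hmem rfl
    have := hd jj hjJ
    omega

lemma deodhar (J : Set B) (i : B) {w : W} (hw : w ∈ cs.DJ J)
    (h1 : cs.length w < cs.length (cs.simple i * w))
    (h2 : cs.simple i * w ∉ cs.DJ J) :
    ∃ j ∈ J, cs.simple i * w = w * cs.simple j := by
  simp only [CoxeterSystem.DJ, Set.mem_setOf_eq, not_forall] at h2
  obtain ⟨j, hj, hle⟩ := h2
  rw [not_lt] at hle
  have hsw : cs.length (cs.simple i * w) = cs.length w + 1 := by
    rcases cs.length_simple_mul w i with h' | h' <;> omega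
  have hwj : cs.length (w * cs.simple j) = cs.length w + 1 := by
    have := hw j hj
    rcases cs.length_mul_simple w j with h' | h' <;> omega
  have h3 : cs.length (cs.simple i * w * cs.simple j) = cs.length w := by
    have hne := cs.length_mul_simple_ne (cs.simple i * w) j
    rcases cs.length_simple_mul (w * cs.simple j) i with h' | h' <;>
      rw [← mul_assoc] at h' <;> omega
  exact ⟨j, hj, lemZ hT1 hup hdown i w j hsw hwj h3⟩

end HeckeAux

set_option maxHeartbeats 1000000 in
open HeckeAux in
/-- Let `H` be the Hecke algebra of `(W,S)` over `A = ℤ[q,q⁻¹]`, with basis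
`(T_w | w ∈ W)` and the usual multiplication rules, and let `J ⊆ S`.  The
induced module `H ⊗_{H_J} A_φ`, where `φ(T_s) = -q⁻¹` for `s ∈ J`, is realised
as the quotient of `H` by the left ideal generated by `T_s + q⁻¹·1` (`s ∈ J`);
the element `T_w ⊗ 1` corresponds to the class of `T_w`.  Then this module is
`A`-free with basis `(T_w ⊗ 1 | w ∈ D_J)`, and for `s ∈ S` and `w ∈ D_J`:
`T_s(T_w ⊗ 1) = T_{sw} ⊗ 1` if `sw > w` and `sw ∈ D_J`;
`T_s(T_w ⊗ 1) = -q⁻¹ (T_w ⊗ 1)` if `sw > w` and `sw ∉ D_J`; and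
`T_s(T_w ⊗ 1) = T_{sw} ⊗ 1 + (q - q⁻¹)(T_w ⊗ 1)` if `sw < w`. -/
theorem induced_module_basis_and_action {B W : Type*} [Group W] {M : CoxeterMatrix B}
    (cs : CoxeterSystem M W) (J : Set B)
    (H : Type*) [Ring H] [Algebra A H]
    (TT : Module.Basis W A H)
    (hT1 : TT 1 = 1)
    (hmul_up : ∀ (i : B) (w : W), cs.length w < cs.length (cs.simple i * w) →
      TT (cs.simple i) * TT w = TT (cs.simple i * w))
    (hmul_down : ∀ (i : B) (w : W), cs.length (cs.simple i * w) < cs.length w →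
      TT (cs.simple i) * TT w = TT (cs.simple i * w) + (qA - qAinv) • TT w)
    (N : Submodule A H)
    (hN : N = (Submodule.span H
      {x : H | ∃ j ∈ J, x = TT (cs.simple j) + qAinv • (1 : H)}).restrictScalars A) :
    (∃ bas : Module.Basis {d : W // d ∈ cs.DJ J} A (H ⧸ N),
        ∀ d : {d : W // d ∈ cs.DJ J}, bas d = Submodule.Quotient.mk (TT d.1)) ∧
    (∀ (i : B), ∀ w ∈ cs.DJ J,
      (cs.length w < cs.length (cs.simple i * w) → cs.simple i * w ∈ cs.DJ J →
        (Submodule.Quotient.mk (TT (cs.simple i) * TT w) : H ⧸ N) =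
          Submodule.Quotient.mk (TT (cs.simple i * w))) ∧
      (cs.length w < cs.length (cs.simple i * w) → cs.simple i * w ∉ cs.DJ J →
        (Submodule.Quotient.mk (TT (cs.simple i) * TT w) : H ⧸ N) =
          (-qAinv) • Submodule.Quotient.mk (TT w)) ∧
      (cs.length (cs.simple i * w) < cs.length w →
        (Submodule.Quotient.mk (TT (cs.simple i) * TT w) : H ⧸ N) =
          Submodule.Quotient.mk (TT (cs.simple i * w)) +
            (qA - qAinv) • Submodule.Quotient.mk (TT w))) := by
  classical
  have hmemN : ∀ x : H, x ∈ Submodule.span H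
      {x : H | ∃ j ∈ J, x = TT (cs.simple j) + qAinv • (1 : H)} → x ∈ N := by
    intro x hx; rw [hN]; exact hx
  -- decomposition functions
  set dp : W → W := fun w => dmin cs J (QuotientGroup.mk w) with hdp
  have hdpDJ : ∀ w, dp w ∈ cs.DJ J := fun w => dmin_mem_DJ hT1 hmul_up hmul_down J _
  set upf : W → W := fun w => (dp w)⁻¹ * w with hupf
  have hupWJ : ∀ w, upf w ∈ WJ cs J := fun w => QuotientGroup.eq.mp (dmin_mk J _)
  have hadd : ∀ w, cs.length w = cs.length (dp w) + cs.length (upf w) :=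
    fun w => length_eq_dmin_add hT1 hmul_up hmul_down J w
  have hdecomp : ∀ w, dp w * upf w = w := fun w => mul_inv_cancel_left _ _
  have hdp_inv : ∀ (w : W) (j : B), j ∈ J → dp (w * cs.simple j) = dp w := by
    intro w j hj
    have h2 : (w * cs.simple j)⁻¹ * w = (cs.simple j)⁻¹ := by group
    have h1 : (QuotientGroup.mk (w * cs.simple j) : W ⧸ WJ cs J) = QuotientGroup.mk w := by
      rw [QuotientGroup.eq, h2]
      exact inv_mem (simple_mem_WJ hj)
    exact congrArg (dmin cs J) h1
  have hup_mul : ∀ (w : W) (j : B), j ∈ J → upf (w * cs.simple j) = upf w * cs.simple j := by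
    intro w j hj
    show (dp (w * cs.simple j))⁻¹ * (w * cs.simple j) = (dp w)⁻¹ * w * cs.simple j
    rw [hdp_inv w j hj, mul_assoc]
  have hdp_of_DJ : ∀ d : W, d ∈ cs.DJ J → dp d = d := by
    intro d hd
    exact eq_dmin_of_mem_DJ hT1 hmul_up hmul_down J hd
  have hup_of_DJ : ∀ d : W, d ∈ cs.DJ J → upf d = 1 := by
    intro d hd
    show (dp d)⁻¹ * d = 1
    rw [hdp_of_DJ d hd, inv_mul_cancel]
  -- the linear map θ
  set θf : W → ({d : W // d ∈ cs.DJ J} →₀ A) :=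
    fun w => Finsupp.single ⟨dp w, hdpDJ w⟩ ((-qAinv)^(cs.length (upf w))) with hθf
  set θ : H →ₗ[A] ({d : W // d ∈ cs.DJ J} →₀ A) := Module.Basis.constr TT ℕ θf with hθdef
  have hθTT : ∀ w, θ (TT w) = θf w := fun w => Module.Basis.constr_basis TT ℕ θf w
  -- key multiplicative property
  have K1 : ∀ (w : W) (j : B), j ∈ J →
      θ (TT w * TT (cs.simple j)) = (-qAinv) • θ (TT w) := by
    intro w j hj
    have hdpe := hdp_inv w j hj
    have hsub : (⟨dp (w * cs.simple j), hdpDJ _⟩ : {d : W // d ∈ cs.DJ J})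
        = ⟨dp w, hdpDJ w⟩ := Subtype.ext hdpe
    have hup_w := hadd w
    have hup_ws := hadd (w * cs.simple j)
    rw [hdpe] at hup_ws
    rcases cs.length_mul_simple w j with hlen | hlen
    · rw [Rup hT1 hmul_up w j (by omega), hθTT, hθTT, hθf]
      simp only
      rw [hsub]
      have hm : cs.length (upf (w * cs.simple j)) = cs.length (upf w) + 1 := by omega
      rw [hm, Finsupp.smul_single, smul_eq_mul, pow_succ']
    · rw [Rdown hT1 hmul_up hmul_down w j (by omega), map_add, map_smul, hθTT, hθTT, hθf]
      simp only
      rw [hsub]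
      have hm : cs.length (upf w) = cs.length (upf (w * cs.simple j)) + 1 := by omega
      set k := cs.length (upf (w * cs.simple j)) with hk
      rw [hm, Finsupp.smul_single, Finsupp.smul_single, ← Finsupp.single_add]
      congr 1
      have hkey : (1 : A) + (qA - qAinv) * (-qAinv) = qAinv * qAinv := by
        have hq : qA * qAinv = 1 := by
          rw [qA, qAinv, ← LaurentPolynomial.T_add]; norm_num
        linear_combination -hq
      simp only [smul_eq_mul, pow_succ]
      ring_nf
      linear_combination ((-qAinv)^k) * hkey
  -- θ kills N
  have K2' : ∀ (j : B), j ∈ J → ∀ h : H,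
      θ (h * (TT (cs.simple j) + qAinv • (1:H))) = 0 := by
    intro j hj
    have hzero : (θ.comp (LinearMap.mulRight A (TT (cs.simple j) + qAinv • (1:H)))) = 0 := by
      apply Module.Basis.ext TT
      intro w
      simp only [LinearMap.comp_apply, LinearMap.mulRight_apply, LinearMap.zero_apply]
      rw [mul_add, map_add, K1 w j hj, mul_smul_comm, mul_one, map_smul, ← add_smul]
      rw [neg_add_cancel, zero_smul]
    intro h
    exact DFunLike.congr_fun hzero h
  have hker : N ≤ LinearMap.ker θ := by
    intro x hx
    rw [hN, Submodule.restrictScalars_mem] at hx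
    rw [LinearMap.mem_ker]
    have key : ∀ h : H, θ (h * x) = 0 := by
      refine Submodule.span_induction ?_ ?_ ?_ ?_ hx
      · rintro y ⟨j, hj, rfl⟩ h
        exact K2' j hj h
      · intro h; rw [mul_zero, map_zero]
      · intro y z _ _ ihy ihz h
        rw [mul_add, map_add, ihy h, ihz h, add_zero]
      · intro a y _ ih h
        rw [smul_eq_mul, ← mul_assoc]
        exact ih (h * a)
    have := key 1
    rwa [one_mul] at this
  -- the congruence: TT w ≡ (-qAinv)^(ℓ (upf w)) • TT (dp w)  mod N
  have K3 : ∀ (n : ℕ) (w : W), cs.length (upf w) = n →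
      TT w - ((-qAinv)^(cs.length (upf w))) • TT (dp w) ∈ N := by
    intro n
    induction n using Nat.strong_induction_on with
    | _ n ih =>
      intro w hn
      rcases Nat.eq_zero_or_pos n with h0 | hpos
      · have hu1 : upf w = 1 := cs.length_eq_zero_iff.mp (by omega)
        have hdw : dp w = w := by
          have := hdecomp w
          rwa [hu1, mul_one] at this
        rw [hn, h0, pow_zero, one_smul, hdw, sub_self]
        exact zero_mem N
      · obtain ⟨ω, hωJ, hωu⟩ := exists_Jword (hupWJ w)
        obtain ⟨υ, hυJ, hυprod, hυred⟩ :=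
          exists_reduced_Jword hT1 hmul_up hmul_down J ω.length ω rfl hωJ
        rw [hωu] at hυprod
        have hlυ : υ.length = n := by rw [← hn, ← hυprod]; exact hυred.symm
        have hne : υ ≠ [] := by intro h; rw [h] at hlυ; simp at hlυ; omega
        rcases List.eq_nil_or_concat' υ with h | ⟨υ', j, rfl⟩
        · exact absurd h hne
        have hjJ : j ∈ J := hυJ j (by simp)
        have husj : upf w * cs.simple j = cs.wordProd υ' := by
          rw [← hυprod, cs.wordProd_append, cs.wordProd_singleton, mul_assoc,
            cs.simple_mul_simple_self, mul_one]
        have hℓusj : cs.length (upf w * cs.simple j) = n - 1 := by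
          have hle : cs.length (upf w * cs.simple j) ≤ n - 1 := by
            rw [husj]
            calc cs.length (cs.wordProd υ') ≤ υ'.length := cs.length_wordProd_le _
              _ ≤ n - 1 := by simp at hlυ; omega
          have := cs.length_mul_simple (upf w) j
          omega
        set w' := w * cs.simple j with hw'
        have hdpw' : dp w' = dp w := hdp_inv w j hjJ
        have hupw' : upf w' = upf w * cs.simple j := hup_mul w j hjJ
        have hlupw' : cs.length (upf w') = n - 1 := by rw [hupw']; exact hℓusj
        have hlw' : cs.length w' = cs.length w - 1 ∧ 1 ≤ cs.length w := by
          have h1 := hadd w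
          have h2 := hadd w'
          rw [hdpw'] at h2
          constructor <;> omega
        have hRup : TT w' * TT (cs.simple j) = TT w := by
          have hww : w' * cs.simple j = w := by
            rw [hw', mul_assoc, cs.simple_mul_simple_self, mul_one]
          have hlt : cs.length w' < cs.length (w' * cs.simple j) := by
            rw [hww]; omega
          rw [Rup hT1 hmul_up w' j hlt, hww]
        have hmem1 : TT w' * (TT (cs.simple j) + qAinv • (1:H)) ∈ N := by
          apply hmemN
          have hgen : (TT (cs.simple j) + qAinv • (1:H)) ∈
              {x : H | ∃ j ∈ J, x = TT (cs.simple j) + qAinv • (1 : H)} := ⟨j, hjJ, rfl⟩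
          have := Submodule.smul_mem (Submodule.span H
            {x : H | ∃ j ∈ J, x = TT (cs.simple j) + qAinv • (1 : H)}) (TT w')
            (Submodule.subset_span hgen)
          simpa [smul_eq_mul] using this
        have hmem2 := ih (n-1) (by omega) w' hlupw'
        rw [hlupw'] at hmem2
        obtain ⟨k, hkn⟩ : ∃ k, n = k + 1 := ⟨n - 1, by omega⟩
        rw [show n - 1 = k from by omega] at hmem2
        have hexp : TT w - ((-qAinv)^(cs.length (upf w))) • TT (dp w)
            = (TT w' * (TT (cs.simple j) + qAinv • (1:H)))
              + (-qAinv) • (TT w' - ((-qAinv)^k) • TT (dp w')) := by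
          rw [mul_add, hRup, hdpw', mul_smul_comm, mul_one, hn, hkn]
          module
        rw [hexp]
        exact add_mem hmem1 (Submodule.smul_mem N _ hmem2)
  -- build the equivalence
  set σ : ({d : W // d ∈ cs.DJ J} →₀ A) →ₗ[A] (H ⧸ N) :=
    Finsupp.linearCombination A
      (fun d : {d : W // d ∈ cs.DJ J} => Submodule.Quotient.mk (TT d.1)) with hσdef
  set θbar : (H ⧸ N) →ₗ[A] ({d : W // d ∈ cs.DJ J} →₀ A) := N.liftQ θ hker with hθbardef
  have hθbar_mk : ∀ x : H, θbar (Submodule.Quotient.mk x) = θ x := fun x => rfl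
  have hθTT_DJ : ∀ (d : {d : W // d ∈ cs.DJ J}), θ (TT d.1) = Finsupp.single d 1 := by
    intro d
    rw [hθTT, hθf]
    simp only
    have h1 : dp d.1 = d.1 := hdp_of_DJ d.1 d.2
    have h2 : cs.length (upf d.1) = 0 := by
      rw [hup_of_DJ d.1 d.2]; exact cs.length_one
    have hsub : (⟨dp d.1, hdpDJ d.1⟩ : {d : W // d ∈ cs.DJ J}) = d := Subtype.ext h1
    rw [hsub, h2, pow_zero]
  have hσθ : ∀ w : W, σ (θ (TT w)) = Submodule.Quotient.mk (TT w) := by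
    intro w
    rw [hθTT, hθf]
    simp only
    rw [hσdef, Finsupp.linearCombination_single]
    rw [← Submodule.Quotient.mk_smul]
    symm
    rw [Submodule.Quotient.eq]
    exact K3 (cs.length (upf w)) w rfl
  have hcomp1 : θbar ∘ₗ σ = LinearMap.id := by
    apply Finsupp.lhom_ext
    intro d b
    rw [LinearMap.comp_apply, LinearMap.id_apply, hσdef, Finsupp.linearCombination_single]
    rw [map_smul, hθbar_mk, hθTT_DJ d, Finsupp.smul_single, smul_eq_mul, mul_one]
  have hcomp2 : σ ∘ₗ θbar = LinearMap.id := by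
    apply Submodule.linearMap_qext
    apply Module.Basis.ext TT
    intro w
    simp only [LinearMap.comp_apply, Submodule.mkQ_apply, LinearMap.id_apply]
    rw [hθbar_mk]
    exact hσθ w
  set e : (H ⧸ N) ≃ₗ[A] ({d : W // d ∈ cs.DJ J} →₀ A) :=
    LinearEquiv.ofLinear θbar σ hcomp1 hcomp2 with hedef
  set bas : Module.Basis {d : W // d ∈ cs.DJ J} A (H ⧸ N) := Module.Basis.ofRepr e with hbasdef
  constructor
  · refine ⟨bas, fun d => ?_⟩
    have h1 : bas d = bas.repr.symm (Finsupp.single d 1) :=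
      (bas.repr_symm_single_one d).symm
    rw [h1]
    have h2 : bas.repr = e := rfl
    rw [h2]
    show e.symm (Finsupp.single d 1) = _
    have h3 : e.symm (Finsupp.single d 1) = σ (Finsupp.single d 1) := rfl
    rw [h3, hσdef, Finsupp.linearCombination_single, one_smul]
  · intro i w hw
    refine ⟨?_, ?_, ?_⟩
    · intro hlt _
      rw [hmul_up i w hlt]
    · intro hlt hnot
      obtain ⟨j, hj, hD⟩ := deodhar hT1 hmul_up hmul_down J i hw hlt hnot
      have hlt2 : cs.length w < cs.length (w * cs.simple j) := hw j hj
      rw [hmul_up i w hlt, hD, ← Rup hT1 hmul_up w j hlt2]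
      have hTg : TT w * (TT (cs.simple j) + qAinv • (1:H)) ∈ N := by
        apply hmemN
        have hgen : (TT (cs.simple j) + qAinv • (1:H)) ∈
            {x : H | ∃ j ∈ J, x = TT (cs.simple j) + qAinv • (1 : H)} := ⟨j, hj, rfl⟩
        have := Submodule.smul_mem (Submodule.span H
          {x : H | ∃ j ∈ J, x = TT (cs.simple j) + qAinv • (1 : H)}) (TT w)
          (Submodule.subset_span hgen)
        simpa [smul_eq_mul] using this
      have hsplit : TT w * TT (cs.simple j)
          = TT w * (TT (cs.simple j) + qAinv • (1:H)) - qAinv • TT w := by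
        rw [mul_add, mul_smul_comm, mul_one, add_sub_cancel_right]
      rw [hsplit, Submodule.Quotient.mk_sub,
        (Submodule.Quotient.mk_eq_zero N).mpr hTg, zero_sub,
        Submodule.Quotient.mk_smul, neg_smul]
    · intro hlt
      rw [hmul_down i w hlt, Submodule.Quotient.mk_add, Submodule.Quotient.mk_smul]

end
end
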